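/- arXiv:2501.08602 — 4 statements merged into one kernel-verified Lean document; each statement's English description precedes it below -/
import Mathlib

section
/- Let s ≥ 0 be an integer. For every even integer n with n > N_s^even, the generalized Frobenius number of the triple (t_n, n+1, n+3) satisfies g(t_n, n+1, n+3; s) = g(n+1, n+3; x_s^even) + y_s^even·t_n = (x_s^even + 1)(n+1)(n+3) − (n+1) − (n+3) + y_s^even·t_n. (Here n+1 = t_{n+1}/d_1 and n+3 = t_{n+2}/d_1 where d_1 = gcd(t_{n+1}, t_{n+2}) = (n+2)/2 for even n.) -/
open Finset

/-- Number of representations of `m` as `∑ i, a i * x i` with nonnegative integers `x i`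
(for positive weights `a i`, every solution satisfies `x i ≤ m`). -/
def repCount {k : ℕ} (a : Fin k → ℕ) (m : ℕ) : ℕ :=
  (Finset.univ.filter (fun x : Fin k → Fin (m + 1) => ∑ i, a i * (x i : ℕ) = m)).card

/-- Representation count extended to the integers (no representations of negative numbers). -/
def repCountZ {k : ℕ} (a : Fin k → ℕ) (m : ℤ) : ℕ :=
  if 0 ≤ m then repCount a m.toNat else 0

/-- The generalized Frobenius number `g(a; s)`: the largest integer having at most `s`
representations by the tuple `a`. -/
noncomputable def genFrob {k : ℕ} (a : Fin k → ℕ) (s : ℕ) : ℤ :=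
  sSup {m : ℤ | repCountZ a m ≤ s}

/-- The `n`-th triangular number `t n = n(n+1)/2`. -/
def t (n : ℕ) : ℕ := n * (n + 1) / 2

/-- `N_s^even = 6⌊√(s+1)⌋ - 6`. -/
def NEven (s : ℕ) : ℤ := 6 * (Nat.sqrt (s + 1) : ℤ) - 6

/-- `N_s^odd = 6⌊(√(4s+5) - 1)/2⌋ - 3`. -/
def NOdd (s : ℕ) : ℤ := 6 * (((Nat.sqrt (4 * s + 5) - 1) / 2 : ℕ) : ℤ) - 3

/-- `δ_s = 1` if `s ≥ ⌊√s⌋² + ⌊√s⌋`, and `0` otherwise. -/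
def deltaS (s : ℕ) : ℤ := if Nat.sqrt s ^ 2 + Nat.sqrt s ≤ s then 1 else 0

/-- `q_s = 2⌊√s⌋ + 2 + δ_s`. -/
def qS (s : ℕ) : ℤ := 2 * (Nat.sqrt s : ℤ) + 2 + deltaS s

/-- `c_s = s - ⌊√s⌋² - δ_s⌊√s⌋`. -/
def cS (s : ℕ) : ℤ := (s : ℤ) - (Nat.sqrt s : ℤ) ^ 2 - deltaS s * (Nat.sqrt s : ℤ)

/-- For `s = k(k+1) + i` with `0 ≤ i ≤ 2k+1`: `x_s^even`. -/
def xEvenN (k i : ℕ) : ℕ := if i ≤ k then i else i - k - 1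

/-- For `s = k(k+1) + i` with `0 ≤ i ≤ 2k+1`: `y_s^even`. -/
def yEvenN (k i : ℕ) : ℕ := if i ≤ k then 2 * (k - i) else 4 * k + 3 - 2 * i

/-- For `s = k(k+1) + i` with `0 ≤ i ≤ 2k+1`: `x_s^odd`. -/
def xOddN (k i : ℕ) : ℕ := if i ≤ k then 2 * i else 2 * (i - k) - 1

/-- For `s = k(k+1) + i` with `0 ≤ i ≤ 2k+1`: `y_s^odd`. -/
def yOddN (k i : ℕ) : ℕ := if i ≤ k then k - i else 2 * k + 1 - i


def P2 (b c N : ℕ) : Finset (ℕ × ℕ) :=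
  (Finset.range (N+1) ×ˢ Finset.range (N+1)).filter fun p => b*p.1 + c*p.2 = N

lemma repCount_pair (b c N : ℕ) (hb : 0 < b) (hc : 0 < c) :
    repCount ![b, c] N = (P2 b c N).card := by
  apply Finset.card_bij (fun x _ => ((x 0 : ℕ), (x 1 : ℕ)))
  · intro x hx
    simp only [mem_filter, mem_univ, true_and, Fin.sum_univ_two] at hx
    simp only [Matrix.cons_val_zero, Matrix.cons_val_one, Matrix.head_cons] at hx
    simp only [P2, mem_filter, mem_product, mem_range]
    refine ⟨⟨?_, ?_⟩, hx⟩ <;> nlinarith [(x 0).isLt, (x 1).isLt]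
  · intro x hx y hy hxy
    funext j
    fin_cases j <;> simp_all [Fin.ext_iff, Prod.ext_iff]
  · intro p hp
    simp only [P2, mem_filter, mem_product, mem_range] at hp
    refine ⟨![⟨p.1, hp.1.1⟩, ⟨p.2, hp.1.2⟩], ?_, ?_⟩
    · simp [Fin.sum_univ_two, hp.2]
    · simp

def P3 (a b c N : ℕ) : Finset (ℕ × ℕ × ℕ) :=
  (Finset.range (N+1) ×ˢ Finset.range (N+1) ×ˢ Finset.range (N+1)).filter
    fun p => a*p.1 + b*p.2.1 + c*p.2.2 = N

lemma repCount_triple (a b c N : ℕ) :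
    repCount ![a, b, c] N = (P3 a b c N).card := by
  apply Finset.card_bij (fun x _ => ((x 0 : ℕ), (x 1 : ℕ), (x 2 : ℕ)))
  · intro x hx
    simp only [mem_filter, mem_univ, true_and, Fin.sum_univ_three] at hx
    simp only [Matrix.cons_val_zero, Matrix.cons_val_one, Matrix.head_cons,
      Matrix.cons_val_two, Matrix.tail_cons] at hx
    simp only [P3, mem_filter, mem_product, mem_range]
    exact ⟨⟨(x 0).isLt, (x 1).isLt, (x 2).isLt⟩, hx⟩
  · intro x hx y hy hxy
    funext j
    fin_cases j <;> simp_all [Fin.ext_iff, Prod.ext_iff]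
  · intro p hp
    simp only [P3, mem_filter, mem_product, mem_range] at hp
    refine ⟨![⟨p.1, hp.1.1⟩, ⟨p.2.1, hp.1.2.1⟩, ⟨p.2.2, hp.1.2.2⟩], ?_, ?_⟩
    · simp [Fin.sum_univ_three, hp.2]
    · simp

-- fiberwise: card P3 (m*b) b c N = sum over P2 of (p.1/m + 1)
lemma card_P3 (m b c N : ℕ) (hm : 0 < m) (hb : 0 < b) :
    (P3 (m*b) b c N).card = ∑ p ∈ P2 b c N, (p.1 / m + 1) := by
  rw [Finset.card_eq_sum_card_fiberwise
    (f := fun q : ℕ × ℕ × ℕ => (m * q.1 + q.2.1, q.2.2)) (t := P2 b c N) ?hf]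
  case hf =>
    intro q hq
    simp only [Finset.mem_coe, P3, mem_filter, mem_product, mem_range] at hq
    simp only [Finset.mem_coe, P2, mem_filter, mem_product, mem_range]
    obtain ⟨⟨h1, h2, h3⟩, he⟩ := hq
    constructor
    · constructor
      · nlinarith
      · exact h3
    · nlinarith [he]
  · apply Finset.sum_congr rfl
    intro p hp
    simp only [P2, mem_filter, mem_product, mem_range] at hp
    obtain ⟨⟨h1, h2⟩, he⟩ := hp
    -- fiber over p : {q ∈ P3 : m q.1 + q.2.1 = p.1, q.2.2 = p.2} ≃ range (p.1/m + 1)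
    rw [← Finset.card_range (p.1/m + 1)]
    apply Finset.card_bij (fun q _ => q.1)
    · intro q hq
      simp only [mem_filter, P3, mem_product, mem_range] at hq
      obtain ⟨⟨_, he3⟩, hfib⟩ := hq
      have : m * q.1 ≤ p.1 := by
        have := congrArg Prod.fst hfib
        simp at this; omega
      simp only [mem_range]
      have := Nat.div_le_div_right (c := m) this
      rw [Nat.mul_div_cancel_left _ hm] at this
      omega
    · intro q hq r hr hqr
      simp only [mem_filter, P3, mem_product, mem_range] at hq hr
      have h1 := hq.2; have h2 := hr.2
      rw [Prod.ext_iff] at h1 h2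
      simp only at h1 h2
      have hmm : m * q.1 = m * r.1 := by rw [hqr]
      ext
      · exact hqr
      · omega
      · rw [h1.2, h2.2]
    · intro j hj
      simp only [mem_range] at hj
      have hmj : m * j ≤ p.1 := by
        have : j ≤ p.1 / m := by omega
        calc m * j ≤ m * (p.1/m) := Nat.mul_le_mul_left _ this
        _ ≤ p.1 := Nat.mul_div_le _ _
      refine ⟨(j, p.1 - m*j, p.2), ?_, rfl⟩
      simp only [mem_filter, P3, mem_product, mem_range]
      refine ⟨⟨⟨?_, ?_, h2⟩, ?_⟩, ?_⟩
      · -- j ≤ N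
        nlinarith
      · omega
      · -- equation
        have h4 : m*b*j + b*(p.1-m*j) = b*p.1 := by
          have h5 : m*b*j = b*(m*j) := by ring
          rw [h5, ← Nat.mul_add, Nat.add_sub_cancel' hmj]
        omega
      · rw [Prod.ext_iff]; constructor
        · simp; omega
        · rfl


lemma P2_mem_mod (b c ρ N : ℕ) (hc : 0 < c) (hcop : Nat.Coprime b c) (hρ : ρ < c)
    (hmod : (b * ρ) % c = N % c) (p : ℕ × ℕ) (hp : p ∈ P2 b c N) :
    p.1 % c = ρ := by
  simp only [P2, mem_filter, mem_product, mem_range] at hp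
  obtain ⟨-, he⟩ := hp
  have h3 : b * p.1 % c = b * ρ % c := by
    rw [hmod, ← he, Nat.add_mul_mod_self_left]
  have h4 : p.1 ≡ ρ [MOD c] := Nat.ModEq.cancel_left_of_coprime hcop.symm h3
  rw [Nat.ModEq] at h4
  rwa [Nat.mod_eq_of_lt hρ] at h4

lemma P2_sum (g : ℕ → ℕ) (b c ρ N : ℕ) (hb : 0 < b) (hc : 0 < c)
    (hcop : Nat.Coprime b c) (hρ : ρ < c) (hmod : (b * ρ) % c = N % c) :
    ∑ p ∈ P2 b c N, g p.1 =
      if b*ρ ≤ N then ∑ j ∈ range ((N - b*ρ)/(b*c) + 1), g (ρ + j*c) else 0 := by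
  have hbc : 0 < b*c := Nat.mul_pos hb hc
  split_ifs with hle
  · have hd : c ∣ (N - b*ρ) := by
      have h1 : N % c = (b*ρ) % c := hmod.symm
      exact (Nat.modEq_iff_dvd' hle).mp h1.symm
    symm
    apply Finset.sum_bij (fun j _ => ((ρ + j*c : ℕ), (N - b*(ρ + j*c))/c))
    · intro j hj
      simp only [mem_range] at hj
      have hj' : j ≤ (N - b*ρ)/(b*c) := by omega
      have h2 : j * (b*c) ≤ N - b*ρ := le_trans (Nat.mul_le_mul_right _ hj') (Nat.div_mul_le_self _ _)
      have key : b*(ρ + j*c) = b*ρ + j*(b*c) := by ring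
      have h3 : b*(ρ + j*c) ≤ N := by omega
      have h4 : c ∣ (N - b*(ρ + j*c)) := by
        have e1 : N - b*(ρ+j*c) = (N - b*ρ) - j*(b*c) := by omega
        rw [e1]
        exact Nat.dvd_sub hd ⟨j*b, by ring⟩
      simp only [P2, mem_filter, mem_product, mem_range]
      have h6 : c * ((N - b*(ρ + j*c))/c) = N - b*(ρ + j*c) := Nat.mul_div_cancel' h4
      refine ⟨⟨?_, ?_⟩, by omega⟩
      · have : 1 * (ρ + j*c) ≤ b * (ρ + j*c) := Nat.mul_le_mul_right _ hb
        omega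
      · have := Nat.div_le_self (N - b*(ρ + j*c)) c
        omega
    · intro j hj j' hj' h
      have := congrArg Prod.fst h
      simp only at this
      have : j * c = j' * c := by omega
      exact Nat.eq_of_mul_eq_mul_right hc this
    · intro p hp
      have hmodp : p.1 % c = ρ := P2_mem_mod b c ρ N hc hcop hρ hmod p hp
      simp only [P2, mem_filter, mem_product, mem_range] at hp
      obtain ⟨⟨h1, h2⟩, he⟩ := hp
      have hsplit : p.1 = ρ + (p.1 / c) * c := by
        have h0 := Nat.div_add_mod p.1 c
        have : c * (p.1 / c) = (p.1 / c) * c := Nat.mul_comm _ _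
        omega
      set j := p.1 / c with hjdef
      have hb1 : b * p.1 = b*ρ + j*(b*c) := by rw [hsplit]; ring
      have hjle : j ≤ (N - b*ρ)/(b*c) := by
        rw [Nat.le_div_iff_mul_le hbc]
        omega
      refine ⟨j, by simp only [mem_range]; omega, ?_⟩
      have hz' : (N - b*p.1)/c = p.2 := by
        have e2 : N - b*p.1 = c*p.2 := by omega
        rw [e2, Nat.mul_div_cancel_left _ hc]
      have e3 : ρ + j*c = p.1 := hsplit.symm
      rw [e3]
      exact Prod.ext rfl hz'
    · intro j hj
      rfl
  · apply Finset.sum_eq_zero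
    intro p hp
    exfalso
    have hmodp : p.1 % c = ρ := P2_mem_mod b c ρ N hc hcop hρ hmod p hp
    simp only [P2, mem_filter, mem_product, mem_range] at hp
    obtain ⟨⟨h1, h2⟩, he⟩ := hp
    have hge : p.1 ≥ ρ := by
      have := Nat.mod_le p.1 c
      omega
    have : b * ρ ≤ b * p.1 := Nat.mul_le_mul_left _ hge
    omega


lemma repCountZ_coe {k : ℕ} (a : Fin k → ℕ) (N : ℕ) : repCountZ a (N : ℤ) = repCount a N := by
  simp [repCountZ]

lemma genFrob_eq_of {k : ℕ} (a : Fin k → ℕ) (s : ℕ) (G : ℤ)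
    (h1 : repCountZ a G ≤ s) (h2 : ∀ N : ℤ, G < N → s < repCountZ a N) :
    genFrob a s = G := by
  have hub : ∀ m ∈ {m : ℤ | repCountZ a m ≤ s}, m ≤ G := by
    intro m hm
    by_contra h
    push_neg at h
    exact absurd hm (by simp only [Set.mem_setOf_eq, not_le]; exact h2 m h)
  exact le_antisymm (csSup_le ⟨G, h1⟩ hub) (le_csSup ⟨G, hub⟩ h1)

lemma coprime_bc (m : ℕ) : Nat.Coprime (2*m+1) (2*m+3) := by
  have h1 := Nat.gcd_dvd_left (2*m+1) (2*m+3)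
  have h2 := Nat.gcd_dvd_right (2*m+1) (2*m+3)
  have h3 : Nat.gcd (2*m+1) (2*m+3) ∣ 2 := by
    have := Nat.dvd_sub h2 h1
    simpa using this
  rcases (Nat.dvd_prime Nat.prime_two).1 h3 with h | h
  · exact h
  · exfalso
    rw [h] at h1
    obtain ⟨q, hq⟩ := h1
    omega


def F (m ρ J : ℕ) : ℕ := ∑ j ∈ range (J+1), ((ρ + j*(2*m+3))/m + 1)

lemma F_term (m ρ j : ℕ) (hm : 0 < m) : (ρ + j*(2*m+3))/m + 1 = 2*j + 1 + (ρ+3*j)/m := by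
  have e : ρ + j*(2*m+3) = (ρ + 3*j) + (2*j)*m := by ring
  rw [e, Nat.add_mul_div_right _ _ hm]
  omega

lemma sum_2j1 (n : ℕ) : ∑ j ∈ range n, (2*j+1) = n^2 := by
  induction n with
  | zero => simp
  | succ n ih => rw [Finset.sum_range_succ, ih]; ring

lemma sum_2j2 (n : ℕ) : ∑ j ∈ range n, (2*j+2) = n^2 + n := by
  induction n with
  | zero => simp
  | succ n ih => rw [Finset.sum_range_succ, ih]; ring

lemma sum_ind (e n : ℕ) : ∑ j ∈ range n, (if e ≤ j then 1 else 0) = n - e := by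
  induction n with
  | zero => simp
  | succ n ih => rw [Finset.sum_range_succ, ih]; split_ifs <;> omega

lemma F_lb1 (m ρ J : ℕ) (hm : 0 < m) : (J+1)^2 ≤ F m ρ J := by
  rw [← sum_2j1 (J+1)]
  apply Finset.sum_le_sum
  intro j hj
  rw [F_term m ρ j hm]
  exact Nat.le_add_right _ _

lemma F_lb2 (m ρ J : ℕ) (hm : 0 < m) :
    (J+1)*(J+1+ρ/m) + ((J+1) - (m - ρ%m + 2)/3) ≤ F m ρ J := by
  have key : ∀ j ∈ range (J+1),
      2*j + 1 + ρ/m + (if (m - ρ%m + 2)/3 ≤ j then 1 else 0) ≤ (ρ + j*(2*m+3))/m + 1 := by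
    intro j hj
    rw [F_term m ρ j hm]
    split_ifs with he
    · -- (ρ+3j)/m ≥ ρ/m + 1
      have h3 : 3*((m - ρ%m + 2)/3) + 2 ≥ m - ρ%m := by omega
      have h3' : ρ%m + 3*j ≥ m := by
        have := Nat.mod_lt ρ hm
        omega
      have hsp : ρ = m*(ρ/m) + ρ%m := (Nat.div_add_mod ρ m).symm
      have : (ρ/m + 1) * m ≤ ρ + 3*j := by nlinarith [Nat.div_add_mod ρ m]
      have := (Nat.le_div_iff_mul_le hm).mpr this
      omega
    · have : ρ/m ≤ (ρ+3*j)/m := Nat.div_le_div_right (by omega)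
      omega
  calc (J+1)*(J+1+ρ/m) + ((J+1) - (m - ρ%m + 2)/3)
      = ∑ j ∈ range (J+1), (2*j + 1 + ρ/m + (if (m - ρ%m + 2)/3 ≤ j then 1 else 0)) := by
        rw [Finset.sum_add_distrib, Finset.sum_add_distrib, sum_ind, sum_2j1,
          Finset.sum_const, Finset.card_range, smul_eq_mul]
        have h1 : (J+1)*(J+1+ρ/m) = (J+1)^2 + (J+1)*(ρ/m) := by ring
        omega
    _ ≤ F m ρ J := Finset.sum_le_sum key

lemma F_even (m u k : ℕ) (hm0 : 0 < m) (hk : 1 ≤ k) (hu : u ≤ k)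
    (hm : 3*k ≤ m+2) (hm2 : 3*(k-u) ≤ m) :
    F m (2*m+2-3*u) (k-1) = k*k + k + (k - u) := by
  have hk1 : k - 1 + 1 = k := by omega
  unfold F
  rw [hk1]
  have key : ∀ j ∈ range k,
      ((2*m+2-3*u) + j*(2*m+3))/m + 1 = 2*j+2 + (if u ≤ j then 1 else 0) := by
    intro j hj
    simp only [mem_range] at hj
    rw [F_term _ _ _ hm0]
    have hval : (2*m+2-3*u + 3*j)/m = if u ≤ j then 2 else 1 := by
      split_ifs with h <;> [skip; skip] <;>
        (first
          | (apply Nat.div_eq_of_lt_le <;> omega)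
          | (apply Nat.div_eq_of_lt_le
             omega))
    rw [hval]
    split_ifs <;> omega
  rw [Finset.sum_congr rfl key, Finset.sum_add_distrib, sum_2j2, sum_ind]
  have : k^2 = k*k := sq k
  omega

lemma F_odd (m u x : ℕ) (hm0 : 0 < m) (h1 : 3*u+1 ≤ m) (h2 : 3*x ≤ m) :
    F m (m-3*u-1) (x+u) = (x+u+1)^2 + x := by
  unfold F
  have key : ∀ j ∈ range (x+u+1),
      ((m-3*u-1) + j*(2*m+3))/m + 1 = 2*j+1 + (if u+1 ≤ j then 1 else 0) := by
    intro j hj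
    simp only [mem_range] at hj
    rw [F_term _ _ _ hm0]
    have hval : (m-3*u-1 + 3*j)/m = if u+1 ≤ j then 1 else 0 := by
      split_ifs with h <;> [skip; skip] <;>
        (first
          | (apply Nat.div_eq_of_lt_le <;> omega)
          | (apply Nat.div_eq_of_lt_le
             omega))
    rw [hval]
  rw [Finset.sum_congr rfl key, Finset.sum_add_distrib, sum_2j1, sum_ind]
  have : (x+u+1)^2 = (x+u+1)*(x+u+1) := sq _
  omega


lemma arith_even (k i u m w v J : ℕ) (hui : u + i = k) (hm : 3*k ≤ m+2) (hv : v < m)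
    (hρ : w*m + v < 2*m+3) (hJ : J ≤ k)
    (H : (i+1)*(2*m+3) + 2*u*m ≤ w*m + v + (J+1)*(2*m+3)) :
    k*(k+1) + i + 1 ≤ (J+1)*(J+1+w) + ((J+1) - (m - v + 2)/3) := by
  rcases eq_or_lt_of_le hJ with hJk | hJlt
  · subst hJk
    have h1 : (J+1)*(J+1) ≤ (J+1)*(J+1+w) := Nat.mul_le_mul_left _ (by omega)
    have h2 : (J+1)*(J+1) = J*(J+1) + J + 1 := by ring
    omega
  · have hu1 : 1 ≤ u := by
      by_contra hu0
      push_neg at hu0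
      interval_cases u
      · have h1 : (J+1)*(2*m+3) ≤ k*(2*m+3) := Nat.mul_le_mul_right _ (by omega)
        have hik : i = k := by omega
        subst hik
        have h2 : (i+1)*(2*m+3) = i*(2*m+3) + (2*m+3) := by ring
        omega
    obtain ⟨u', rfl⟩ : ∃ u', u = u'+1 := ⟨u-1, by omega⟩
    have hk : k = u'+1+i := by omega
    subst hk
    have e1 : (u'+1+i)*(2*m+3) = (i+1)*(2*m+3) + 2*(u'*m) + 3*u' := by ring
    have e2 : 2*(u'+1)*m = 2*(u'*m) + 2*m := by ring
    rcases eq_or_lt_of_le (show J + 1 ≤ u'+1+i by omega) with hJ1 | hJ2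
    · rw [hJ1] at H
      rcases Nat.lt_or_ge w 2 with hw2 | hw2
      · interval_cases w
        · -- w = 0 : contradiction since v < m
          exfalso
          simp only [Nat.zero_mul, Nat.zero_add] at H
          omega
        · -- w = 1
          have e3 : (J+1)*(J+1+1) = (u'+1+i)*(u'+1+i+1) := by rw [hJ1]
          have hv2 : m ≤ v + 3*u' := by omega
          omega
      · have h1 : (J+1)*(J+1+2) ≤ (J+1)*(J+1+w) := Nat.mul_le_mul_left _ (by omega)
        have h2 : (J+1)*(J+1+2) = (u'+1+i)*(u'+1+i+1) + (u'+1+i) := by rw [hJ1]; ring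
        omega
    · exfalso
      have h1 : (J+1)*(2*m+3) + (2*m+3) ≤ (u'+1+i)*(2*m+3) := by
        have h0 := Nat.mul_le_mul_right (2*m+3) (show J+2 ≤ u'+1+i by omega)
        have e : (J+2)*(2*m+3) = (J+1)*(2*m+3) + (2*m+3) := by ring
        omega
      omega

lemma arith_odd (x u m w v J : ℕ) (hm : 3*(x+u) < m) (hv : v < m)
    (hρ : w*m + v < 2*m+3) (hJ : J ≤ x+u)
    (H : (x+1)*(2*m+3) + (2*u+1)*m ≤ w*m + v + (J+1)*(2*m+3)) :
    (x+u)*(x+u+1) + ((x+u)+x+1) + 1 ≤ (J+1)*(J+1+w) + ((J+1) - (m - v + 2)/3) := by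
  have e0 : (2*u+1)*m = 2*(u*m) + m := by ring
  rcases eq_or_lt_of_le hJ with hJk | hJlt
  · rw [hJk] at H ⊢
    have e1 : (x+u+1)*(2*m+3) = (x+1)*(2*m+3) + 2*(u*m) + 3*u := by ring
    rcases Nat.eq_zero_or_pos w with hw | hw
    · subst hw
      simp only [Nat.zero_mul, Nat.zero_add] at H
      -- m ≤ v + 3u, so e ≤ u
      have hv2 : m ≤ v + 3*u := by omega
      have e2 : (x+u+1)*(x+u+1+0) = (x+u)*(x+u+1) + (x+u+1) := by ring
      omega
    · have h1 : (x+u+1)*(x+u+1+1) ≤ (x+u+1)*(x+u+1+w) := Nat.mul_le_mul_left _ (by omega)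
      have h2 : (x+u+1)*(x+u+1+1) = (x+u)*(x+u+1) + 2*(x+u) + 2 := by ring
      omega
  · exfalso
    have h1 : (J+1)*(2*m+3) + (2*m+3) ≤ (x+u)*(2*m+3) + (2*m+3) := by
      have h0 := Nat.mul_le_mul_right (2*m+3) (show J+1 ≤ x+u by omega)
      omega
    have e1 : (x+u)*(2*m+3) + (2*m+3) = (x+1)*(2*m+3) + 2*(u*m) + 3*u := by ring
    omega

lemma repCount_pair_eq (m ρ N : ℕ) (hm : 0 < m) (hρ : ρ < 2*m+3)
    (hmod : ((2*m+1) * ρ) % (2*m+3) = N % (2*m+3)) :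
    repCount ![2*m+1, 2*m+3] N =
      if (2*m+1)*ρ ≤ N then (N - (2*m+1)*ρ)/((2*m+1)*(2*m+3)) + 1 else 0 := by
  rw [repCount_pair _ _ _ (by omega) (by omega)]
  have h := P2_sum (fun _ => 1) (2*m+1) (2*m+3) ρ N (by omega) (by omega)
    (coprime_bc m) hρ hmod
  rw [Finset.card_eq_sum_ones, h]
  split_ifs with hle
  · rw [Finset.sum_const, Finset.card_range, smul_eq_mul, mul_one]
  · rfl

lemma repCount_triple_eq (m ρ N : ℕ) (hm : 0 < m) (hρ : ρ < 2*m+3)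
    (hmod : ((2*m+1) * ρ) % (2*m+3) = N % (2*m+3)) :
    repCount ![m*(2*m+1), 2*m+1, 2*m+3] N =
      if (2*m+1)*ρ ≤ N then F m ρ ((N - (2*m+1)*ρ)/((2*m+1)*(2*m+3))) else 0 := by
  rw [repCount_triple, card_P3 _ _ _ _ hm (by omega)]
  have h := P2_sum (fun y => y/m + 1) (2*m+1) (2*m+3) ρ N (by omega) (by omega)
    (coprime_bc m) hρ hmod
  rw [h]
  rfl

-- residue of N
lemma rho_mod (m N : ℕ) :
    ((2*m+1) * (((m+1)*N) % (2*m+3))) % (2*m+3) = N % (2*m+3) := by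
  have h1 : (2*m+1) * (((m+1)*N) % (2*m+3)) % (2*m+3) = (2*m+1) * ((m+1)*N) % (2*m+3) :=
    Nat.mul_mod_mod _ _ _
  have e : (2*m+1)*((m+1)*N) = N + (N*m)*(2*m+3) := by ring
  rw [h1, e, Nat.add_mul_mod_self_right]

-- if N exceeds bc - b - c then b·ρ(N) ≤ N
lemma rho_le (m N : ℕ) (hN : (2*m+1)*(2*m+3) < N + (2*m+1) + (2*m+3)) :
    (2*m+1) * (((m+1)*N) % (2*m+3)) ≤ N := by
  have hρlt : ((m+1)*N) % (2*m+3) < 2*m+3 := Nat.mod_lt _ (by omega)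
  by_contra hgt
  push_neg at hgt
  have hmod := rho_mod m N
  have hdvd : (2*m+3) ∣ (2*m+1)*(((m+1)*N) % (2*m+3)) - N :=
    (Nat.modEq_iff_dvd' (le_of_lt hgt)).mp hmod.symm
  have hge : 2*m+3 ≤ (2*m+1)*(((m+1)*N) % (2*m+3)) - N := Nat.le_of_dvd (by omega) hdvd
  have h2 : (2*m+1)*(((m+1)*N) % (2*m+3)) ≤ (2*m+1)*(2*m+2) :=
    Nat.mul_le_mul_left _ (by omega)
  have hp : (2*m+1)*(2*m+3) = (2*m+1)*(2*m+2) + (2*m+1) := by ring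
  omega

lemma genFrob_pair_eq (m x : ℕ) (hm : 0 < m) :
    genFrob ![2*m+1, 2*m+3] x =
      ((x:ℤ)+1)*(2*m+1)*(2*m+3) - (2*m+1) - (2*m+3) := by
  have hbc : (2*m+1) + (2*m+3) ≤ (2*m+1)*(2*m+3) := by nlinarith
  have h1 : ∀ z : ℕ, (2*m+1) + (2*m+3) ≤ (z+1)*((2*m+1)*(2*m+3)) := fun z =>
    le_trans hbc (Nat.le_mul_of_pos_left _ (by omega))
  set G2 : ℕ := (x+1)*((2*m+1)*(2*m+3)) - ((2*m+1)+(2*m+3)) with hG2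
  have hcast : ((G2 : ℤ)) = ((x:ℤ)+1)*(2*m+1)*(2*m+3) - (2*m+1) - (2*m+3) := by
    push_cast [hG2, Nat.cast_sub (h1 x)]
    ring
  rw [← hcast]
  have hbc1 : (2*m+1)*(2*m+2) + (2*m+1) = (2*m+1)*(2*m+3) := by ring
  have e4 : (x+1)*((2*m+1)*(2*m+3)) = x*((2*m+1)*(2*m+3)) + (2*m+1)*(2*m+3) := by ring
  apply genFrob_eq_of
  · -- value at G2
    rw [repCountZ_coe]
    have hmod : ((2*m+1) * (2*m+2)) % (2*m+3) = G2 % (2*m+3) := by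
      have e : (2*m+1)*(2*m+2) + (x*(2*m+1))*(2*m+3) = G2 + (2*m+3) := by
        have e3 : (x*(2*m+1))*(2*m+3) = x*((2*m+1)*(2*m+3)) := by ring
        have := h1 x
        omega
      calc ((2*m+1)*(2*m+2)) % (2*m+3)
          = ((2*m+1)*(2*m+2) + (x*(2*m+1))*(2*m+3)) % (2*m+3) :=
            (Nat.add_mul_mod_self_right _ _ _).symm
        _ = (G2 + (2*m+3)) % (2*m+3) := by rw [e]
        _ = G2 % (2*m+3) := Nat.add_mod_right _ _
    rw [repCount_pair_eq m (2*m+2) G2 hm (by omega) hmod]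
    split_ifs with hle
    · rcases Nat.eq_zero_or_pos x with rfl | hx0
      · exfalso
        have e0 : (0+1)*((2*m+1)*(2*m+3)) = (2*m+1)*(2*m+3) := by ring
        omega
      obtain ⟨x', rfl⟩ : ∃ x', x = x'+1 := ⟨x-1, by omega⟩
      have e5 : (x'+1+1)*((2*m+1)*(2*m+3)) = (x'+1)*((2*m+1)*(2*m+3)) + (2*m+1)*(2*m+3) := by
        ring
      have e6 : (x'+1)*((2*m+1)*(2*m+3)) = x'*((2*m+1)*(2*m+3)) + (2*m+1)*(2*m+3) := by ring
      have hdiv : (G2 - (2*m+1)*(2*m+2))/((2*m+1)*(2*m+3)) = x' := by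
        apply Nat.div_eq_of_lt_le
        · omega
        · omega
      rw [hdiv]
    · omega
  · -- all larger have > x reps
    intro N hN
    have hG2nn : (0:ℤ) ≤ G2 := Int.natCast_nonneg _
    obtain ⟨Nn, rfl⟩ : ∃ Nn : ℕ, N = (Nn : ℤ) :=
      ⟨N.toNat, (Int.toNat_of_nonneg (le_trans hG2nn (le_of_lt hN))).symm⟩
    rw [repCountZ_coe]
    have hNg : G2 < Nn := by exact_mod_cast hN
    have hρlt : ((m+1)*Nn) % (2*m+3) < 2*m+3 := Nat.mod_lt _ (by omega)
    have hmod : ((2*m+1) * (((m+1)*Nn) % (2*m+3))) % (2*m+3) = Nn % (2*m+3) := rho_mod m Nn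
    have hble : (2*m+1) * (((m+1)*Nn) % (2*m+3)) ≤ Nn := by
      apply rho_le m Nn
      have h7 : (2*m+1)*(2*m+3) ≤ (x+1)*((2*m+1)*(2*m+3)) :=
        Nat.le_mul_of_pos_left _ (by omega)
      omega
    rw [repCount_pair_eq m _ Nn hm hρlt hmod, if_pos hble]
    set ρ : ℕ := ((m+1)*Nn) % (2*m+3) with hρdef
    set J : ℕ := (Nn - (2*m+1)*ρ)/((2*m+1)*(2*m+3)) with hJdef
    have hdvd : (2*m+3) ∣ Nn - (2*m+1)*ρ := (Nat.modEq_iff_dvd' hble).mp hmod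
    have hlt : Nn - (2*m+1)*ρ < (J+1)*((2*m+1)*(2*m+3)) := by
      have e1 := Nat.div_add_mod (Nn - (2*m+1)*ρ) ((2*m+1)*(2*m+3))
      rw [← hJdef] at e1
      have e2 : (Nn - (2*m+1)*ρ) % ((2*m+1)*(2*m+3)) < (2*m+1)*(2*m+3) :=
        Nat.mod_lt _ (by positivity)
      have e3 : (J+1)*((2*m+1)*(2*m+3)) = ((2*m+1)*(2*m+3))*J + (2*m+1)*(2*m+3) := by ring
      omega
    have hdvd2 : (2*m+3) ∣ (J+1)*((2*m+1)*(2*m+3)) - (Nn - (2*m+1)*ρ) :=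
      Nat.dvd_sub ⟨(J+1)*(2*m+1), by ring⟩ hdvd
    have hstep : Nn - (2*m+1)*ρ + (2*m+3) ≤ (J+1)*((2*m+1)*(2*m+3)) := by
      have := Nat.le_of_dvd (by omega) hdvd2
      omega
    have hfin : (x+1)*(2*m+3) ≤ ρ + (J+1)*(2*m+3) := by
      by_contra hcon
      push_neg at hcon
      have h5 : ρ + (J+1)*(2*m+3) + 1 ≤ (x+1)*(2*m+3) := hcon
      have h6 := Nat.mul_le_mul_left (2*m+1) h5
      have e9 : (2*m+1)*(ρ + (J+1)*(2*m+3) + 1)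
          = (2*m+1)*ρ + (J+1)*((2*m+1)*(2*m+3)) + (2*m+1) := by ring
      have e10 : (2*m+1)*((x+1)*(2*m+3)) = (x+1)*((2*m+1)*(2*m+3)) := by ring
      omega
    have hxJ : x ≤ J := by
      by_contra hcon
      push_neg at hcon
      have h2 := Nat.mul_le_mul_right (2*m+3) (show J+2 ≤ x+1 by omega)
      have e10 : (J+2)*(2*m+3) = (J+1)*(2*m+3) + (2*m+3) := by ring
      omega
    omega

lemma mod_of_plus (b c ρ q GN : ℕ) (h : b*ρ + q*(b*c) = GN + c) : (b*ρ) % c = GN % c := by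
  calc (b*ρ)%c = (b*ρ + (q*b)*c)%c := (Nat.add_mul_mod_self_right _ _ _).symm
    _ = (GN + c)%c := by rw [show (q*b)*c = q*(b*c) by ring, h]
    _ = GN%c := Nat.add_mod_right _ _

lemma triple_ub (m k sVal GN P : ℕ) (hm : 0 < m)
    (hGN : GN + (2*m+3) = (2*m+1)*P)
    (hGlb : (2*m+1)*(2*m+3) ≤ GN + (2*m+1) + (2*m+3))
    (hsk : sVal + 1 ≤ (k+2)^2)
    (harith : ∀ w v J, v < m → w*m + v < 2*m+3 → J ≤ k →
        P + 1 ≤ w*m + v + (J+1)*(2*m+3) →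
        sVal + 1 ≤ (J+1)*(J+1+w) + ((J+1) - (m - v + 2)/3)) :
    ∀ N : ℤ, (GN:ℤ) < N → sVal < repCountZ ![m*(2*m+1), 2*m+1, 2*m+3] N := by
  intro N hN
  have hGnn : (0:ℤ) ≤ GN := Int.natCast_nonneg _
  obtain ⟨Nn, rfl⟩ : ∃ Nn : ℕ, N = (Nn : ℤ) :=
    ⟨N.toNat, (Int.toNat_of_nonneg (le_trans hGnn (le_of_lt hN))).symm⟩
  rw [repCountZ_coe]
  have hNg : GN < Nn := by exact_mod_cast hN
  have hρlt : ((m+1)*Nn) % (2*m+3) < 2*m+3 := Nat.mod_lt _ (by omega)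
  have hmod := rho_mod m Nn
  have hble : (2*m+1) * (((m+1)*Nn) % (2*m+3)) ≤ Nn := rho_le m Nn (by omega)
  rw [repCount_triple_eq m _ Nn hm hρlt hmod, if_pos hble]
  set ρ : ℕ := ((m+1)*Nn) % (2*m+3) with hρdef
  set J : ℕ := (Nn - (2*m+1)*ρ)/((2*m+1)*(2*m+3)) with hJdef
  have hdvd : (2*m+3) ∣ Nn - (2*m+1)*ρ := (Nat.modEq_iff_dvd' hble).mp hmod
  have hlt : Nn - (2*m+1)*ρ < (J+1)*((2*m+1)*(2*m+3)) := by
    have e1 := Nat.div_add_mod (Nn - (2*m+1)*ρ) ((2*m+1)*(2*m+3))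
    rw [← hJdef] at e1
    have e2 : (Nn - (2*m+1)*ρ) % ((2*m+1)*(2*m+3)) < (2*m+1)*(2*m+3) :=
      Nat.mod_lt _ (by positivity)
    have e3 : (J+1)*((2*m+1)*(2*m+3)) = ((2*m+1)*(2*m+3))*J + (2*m+1)*(2*m+3) := by ring
    omega
  have hdvd2 : (2*m+3) ∣ (J+1)*((2*m+1)*(2*m+3)) - (Nn - (2*m+1)*ρ) :=
    Nat.dvd_sub ⟨(J+1)*(2*m+1), by ring⟩ hdvd
  have hstep : Nn - (2*m+1)*ρ + (2*m+3) ≤ (J+1)*((2*m+1)*(2*m+3)) := by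
    have := Nat.le_of_dvd (by omega) hdvd2
    omega
  -- P + 1 ≤ ρ + (J+1)c
  have hPle : P + 1 ≤ ρ + (J+1)*(2*m+3) := by
    by_contra hcon
    push_neg at hcon
    have h5 : ρ + (J+1)*(2*m+3) ≤ P := by omega
    have h6 := Nat.mul_le_mul_left (2*m+1) h5
    have e9 : (2*m+1)*(ρ + (J+1)*(2*m+3))
        = (2*m+1)*ρ + (J+1)*((2*m+1)*(2*m+3)) := by ring
    omega
  rcases le_or_gt J k with hJk | hJk
  · -- use arith
    have hsplit : m*(ρ/m) + ρ%m = ρ := Nat.div_add_mod ρ m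
    have hcomm : (ρ/m)*m = m*(ρ/m) := Nat.mul_comm _ _
    have hvlt : ρ%m < m := Nat.mod_lt _ hm
    have h := harith (ρ/m) (ρ%m) J hvlt (by omega)
      hJk (by omega)
    calc sVal + 1 ≤ (J+1)*(J+1+ρ/m) + ((J+1) - (m - ρ%m + 2)/3) := h
      _ ≤ F m ρ J := F_lb2 m ρ J hm
  · have h1 : (k+2)^2 ≤ (J+1)^2 := Nat.pow_le_pow_left (by omega) 2
    have := F_lb1 m ρ J hm
    omega

lemma genFrob_triple_even (m u i : ℕ) (hm : 0 < m) (hm1 : 3*(u+i) ≤ m+2) (hmi : 3*i ≤ m) :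
    genFrob ![m*(2*m+1), 2*m+1, 2*m+3] ((u+i)*(u+i+1)+i) =
      ((i:ℤ)+1)*(2*m+1)*(2*m+3) - (2*m+1) - (2*m+3) + (2*u) * (m*(2*m+1)) := by
  set k := u + i with hk
  have h3u : 3*u ≤ m + 2 := by omega
  -- candidate
  set ρs : ℕ := 2*m+2-3*u with hρs
  set GN : ℕ := (2*m+1)*ρs + k*((2*m+1)*(2*m+3)) - (2*m+3) with hGN
  have hcc : 2*m+3 ≤ (2*m+1)*(2*m+3) := Nat.le_mul_of_pos_left _ (by omega)
  have hbig : (2*m+3) ≤ (2*m+1)*ρs + k*((2*m+1)*(2*m+3)) := by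
    rcases Nat.eq_zero_or_pos k with hk0 | hk0
    · have e2 : ρs = 2*m+2 := by omega
      have e3 : (2*m+1)*ρs = (2*m+1)*(2*m+2) := by rw [e2]
      have h5 : 3*(2*m+2) ≤ (2*m+1)*(2*m+2) := Nat.mul_le_mul_right _ (by omega)
      omega
    · have h4 : (2*m+1)*(2*m+3) ≤ k*((2*m+1)*(2*m+3)) := Nat.le_mul_of_pos_left _ hk0
      omega
  have hGNc : GN + (2*m+3) = (2*m+1)*ρs + k*((2*m+1)*(2*m+3)) := by omega
  have hGlb : (2*m+1)*(2*m+3) ≤ GN + (2*m+1) + (2*m+3) := by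
    rcases Nat.eq_zero_or_pos k with hk0 | hk0
    · -- k = 0 : u = i = 0, ρs = 2m+2, GN = (2m+1)(2m+2) - (2m+3)
      have hu0 : u = 0 := by omega
      have hi0 : i = 0 := by omega
      have e1 : (2*m+1)*(2*m+2) + (2*m+1) = (2*m+1)*(2*m+3) := by ring
      have e2 : ρs = 2*m+2 := by omega
      have e3 : (2*m+1)*ρs = (2*m+1)*(2*m+2) := by rw [e2]
      have ek : k*((2*m+1)*(2*m+3)) = 0 := by rw [hk0]; ring
      omega
    · have h4 : (2*m+1)*(2*m+3) ≤ k*((2*m+1)*(2*m+3)) := Nat.le_mul_of_pos_left _ hk0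
      omega
  -- cast identity
  have hcast : ((GN : ℤ)) = ((i:ℤ)+1)*(2*m+1)*(2*m+3) - (2*m+1) - (2*m+3)
      + (2*u) * (m*(2*m+1)) := by
    have h5 : (2*m+3) ≤ (2*m+1)*ρs + k*((2*m+1)*(2*m+3)) := by omega
    rw [hGN]
    push_cast [Nat.cast_sub h5, Nat.cast_sub (show 3*u ≤ 2*m+2 by omega)]
    rw [hk, hρs]
    push_cast [Nat.cast_sub (show 3*u ≤ 2*m+2 by omega)]
    ring
  rw [← hcast]
  apply genFrob_eq_of
  · -- value at GN
    rw [repCountZ_coe]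
    have hmod : ((2*m+1)*ρs) % (2*m+3) = GN % (2*m+3) :=
      mod_of_plus _ _ _ k GN (by omega)
    rw [repCount_triple_eq m ρs GN hm (by omega) hmod]
    rcases Nat.eq_zero_or_pos k with hk0 | hk0
    · have hu0 : u = 0 := by omega
      have e2 : ρs = 2*m+2 := by omega
      have e3 : (2*m+1)*ρs = (2*m+1)*(2*m+2) := by rw [e2]
      have e1 : (2*m+1)*(2*m+2) + (2*m+1) = (2*m+1)*(2*m+3) := by ring
      have ek : k*((2*m+1)*(2*m+3)) = 0 := by rw [hk0]; ring
      rw [if_neg (by omega)]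
      omega
    · have h4 : (2*m+1)*(2*m+3) ≤ k*((2*m+1)*(2*m+3)) := Nat.le_mul_of_pos_left _ hk0
      rw [if_pos (by omega)]
      obtain ⟨k', hk'⟩ : ∃ k', k = k'+1 := ⟨k-1, by omega⟩
      have e5 : (k'+1)*((2*m+1)*(2*m+3)) = k'*((2*m+1)*(2*m+3)) + (2*m+1)*(2*m+3) := by
        ring
      have ekk : k*((2*m+1)*(2*m+3)) = (k'+1)*((2*m+1)*(2*m+3)) := by rw [hk']
      have hdiv : (GN - (2*m+1)*ρs)/((2*m+1)*(2*m+3)) = k - 1 := by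
        have e6 : GN - (2*m+1)*ρs = k*((2*m+1)*(2*m+3)) - (2*m+3) := by omega
        have e7 : k - 1 = k' := by omega
        rw [e6, e7, ekk]
        apply Nat.div_eq_of_lt_le
        · omega
        · omega
      rw [hdiv]
      have hF := F_even m u k hm (by omega) (by omega) (by omega)
        (by rw [hk]; omega)
      rw [hF]
      have h6 : k - u = i := by omega
      have e20 : k*(k+1) = k*k + k := by ring
      have e22 : (u+i)*(u+i+1) = k*k + k := by rw [hk]; ring
      omega
  · -- upper bound via triple_ub
    apply triple_ub m k _ GN (ρs + k*(2*m+3)) hm ?_ hGlb ?_ ?_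
    · -- GN + c = b * P
      have e8 : (2*m+1)*(ρs + k*(2*m+3)) = (2*m+1)*ρs + k*((2*m+1)*(2*m+3)) := by ring
      omega
    · have e9 : (k+2)^2 = k*(k+1) + 3*k + 4 := by ring
      have e10 : k*(k+1) = (u+i)*(u+i+1) := by rw [hk]
      omega
    · -- arith
      intro w v J hv hwv hJ hP
      have hH : (i+1)*(2*m+3) + 2*u*m ≤ w*m + v + (J+1)*(2*m+3) := by
        have e11 : (u+i)*(2*m+3) = i*(2*m+3) + 2*(u*m) + 3*u := by ring
        have e12 : (i+1)*(2*m+3) = i*(2*m+3) + 2*m+3 := by ring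
        have e13 : 2*u*m = 2*(u*m) := by ring
        have e14 : k*(2*m+3) = (u+i)*(2*m+3) := by rw [hk]
        omega
      have := arith_even k i u m w v J (by omega) (by omega) hv hwv hJ hH
      have e10 : k*(k+1) = (u+i)*(u+i+1) := by rw [hk]
      omega

lemma genFrob_triple_odd (m u x : ℕ) (hm : 0 < m) (hmk : 3*(x+u) < m) :
    genFrob ![m*(2*m+1), 2*m+1, 2*m+3] ((x+u)*(x+u+1) + ((x+u)+x+1)) =
      ((x:ℤ)+1)*(2*m+1)*(2*m+3) - (2*m+1) - (2*m+3) + (2*u+1) * (m*(2*m+1)) := by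
  set k := x + u with hk
  have h3u : 3*u + 1 ≤ m := by omega
  set ρs : ℕ := m-3*u-1 with hρs
  set GN : ℕ := (2*m+1)*ρs + (k+1)*((2*m+1)*(2*m+3)) - (2*m+3) with hGN
  have hcc : 2*m+3 ≤ (2*m+1)*(2*m+3) := Nat.le_mul_of_pos_left _ (by omega)
  have h4 : (2*m+1)*(2*m+3) ≤ (k+1)*((2*m+1)*(2*m+3)) := Nat.le_mul_of_pos_left _ (by omega)
  have hbig : (2*m+3) ≤ (2*m+1)*ρs + (k+1)*((2*m+1)*(2*m+3)) := by omega
  have hGNc : GN + (2*m+3) = (2*m+1)*ρs + (k+1)*((2*m+1)*(2*m+3)) := by omega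
  have hGlb : (2*m+1)*(2*m+3) ≤ GN + (2*m+1) + (2*m+3) := by omega
  have hval : ((ρs : ℤ)) = (m:ℤ) - 3*(u:ℤ) - 1 := by
    rw [hρs]; omega
  have hcast : ((GN : ℤ)) = ((x:ℤ)+1)*(2*m+1)*(2*m+3) - (2*m+1) - (2*m+3)
      + (2*u+1) * (m*(2*m+1)) := by
    have hGZ : ((GN:ℤ)) = (2*(m:ℤ)+1)*(ρs:ℤ) + ((k:ℤ)+1)*((2*(m:ℤ)+1)*(2*(m:ℤ)+3))
        - (2*(m:ℤ)+3) := by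
      rw [hGN, Nat.cast_sub hbig]
      push_cast
      ring
    rw [hGZ, hval, hk]
    push_cast
    ring
  rw [← hcast]
  apply genFrob_eq_of
  · rw [repCountZ_coe]
    have hmod : ((2*m+1)*ρs) % (2*m+3) = GN % (2*m+3) :=
      mod_of_plus _ _ _ (k+1) GN (by omega)
    rw [repCount_triple_eq m ρs GN hm (by omega) hmod]
    rw [if_pos (by omega)]
    have e5 : (k+1)*((2*m+1)*(2*m+3)) = k*((2*m+1)*(2*m+3)) + (2*m+1)*(2*m+3) := by ring
    have hdiv : (GN - (2*m+1)*ρs)/((2*m+1)*(2*m+3)) = k := by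
      have e6 : GN - (2*m+1)*ρs = (k+1)*((2*m+1)*(2*m+3)) - (2*m+3) := by omega
      rw [e6]
      apply Nat.div_eq_of_lt_le
      · omega
      · omega
    rw [hdiv]
    have hF := F_odd m u x hm h3u (by omega)
    have hρF : F m ρs (x+u) = (x+u+1)^2 + x := by rw [hρs]; exact hF
    have hxu : x + u = k := hk.symm
    rw [hxu] at hρF
    rw [hρF]
    have e20 : (x+u+1)^2 = (x+u)*(x+u+1) + (x+u) + 1 := by ring
    have e15 : (x+u)*(x+u+1) = k*(k+1) := by rw [hk]
    have e16 : (x+u+1)^2 = (k+1)^2 := by rw [hk]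
    omega
  · apply triple_ub m k _ GN (ρs + (k+1)*(2*m+3)) hm ?_ hGlb ?_ ?_
    · have e8 : (2*m+1)*(ρs + (k+1)*(2*m+3)) = (2*m+1)*ρs + (k+1)*((2*m+1)*(2*m+3)) := by
        ring
      omega
    · have e9 : (k+2)^2 = k*(k+1) + 3*k + 4 := by ring
      omega
    · intro w v J hv hwv hJ hP
      have hH : (x+1)*(2*m+3) + (2*u+1)*m ≤ w*m + v + (J+1)*(2*m+3) := by
        have e11 : (x+u+1)*(2*m+3) = (x+1)*(2*m+3) + 2*(u*m) + 3*u := by ring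
        have e12 : (2*u+1)*m = 2*(u*m) + m := by ring
        have e14 : (k+1)*(2*m+3) = (x+u+1)*(2*m+3) := by rw [hk]
        omega
      have := arith_odd x u m w v J (by omega) hv hwv (by omega) hH
      have e15 : (x+u)*(x+u+1) = k*(k+1) := by rw [hk]
      omega

lemma sqrt_eq_of (r A : ℕ) (h1 : r*r ≤ A) (h2 : A < (r+1)*(r+1)) : Nat.sqrt A = r :=
  le_antisymm (Nat.lt_succ_iff.mp (Nat.sqrt_lt.mpr h2)) (Nat.le_sqrt.mpr h1)

/-- with `s = k(k+1) + i`, `0 ≤ i ≤ 2k+1`, for even `n > N_s^even`,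
`g(t_n, n+1, n+3; s) = g(n+1, n+3; x_s^even) + y_s^even·t_n
  = (x_s^even + 1)(n+1)(n+3) - (n+1) - (n+3) + y_s^even·t_n`. -/
theorem stmt_10 (s k i n : ℕ) (hi : i ≤ 2 * k + 1) (hs : s = k * (k + 1) + i)
    (hn : Even n) (hbound : (n : ℤ) > NEven s) :
    genFrob ![t n, n + 1, n + 3] s =
        genFrob ![n + 1, n + 3] (xEvenN k i) + ((yEvenN k i * t n : ℕ) : ℤ) ∧
    genFrob ![t n, n + 1, n + 3] s =
        ((xEvenN k i : ℤ) + 1) * ((n : ℤ) + 1) * ((n : ℤ) + 3) - ((n : ℤ) + 1) - ((n : ℤ) + 3)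
          + ((yEvenN k i * t n : ℕ) : ℤ) := by
  subst hs
  obtain ⟨m, rfl⟩ : ∃ m, n = 2*m := by
    obtain ⟨r, hr⟩ := hn
    exact ⟨r, by omega⟩
  have htn : t (2*m) = m*(2*m+1) := by
    have e : 2*m*(2*m+1) = m*(2*m+1)*2 := by ring
    unfold t
    rw [e]
    exact Nat.mul_div_cancel _ (by omega)
  have ekk : k*(k+1) = k*k + k := by ring
  have ekk1 : (k+1)*(k+1) = k*k + 2*k + 1 := by ring
  rw [NEven] at hbound
  by_cases hik : i ≤ k
  · -- even case
    set u := k - i with hu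
    have huik : u + i = k := by omega
    have hx : xEvenN k i = i := if_pos hik
    have hy : yEvenN k i = 2*u := by rw [yEvenN, if_pos hik]
    -- m bounds
    have hm1 : 3*(u+i) ≤ m+2 ∧ 3*i ≤ m ∧ 0 < m := by
      rcases eq_or_lt_of_le hik with hieq | hilt
      · have hsq : Nat.sqrt (k*(k+1)+i+1) = k+1 := by
          apply sqrt_eq_of
          · omega
          · have e2 : (k+1+1)*(k+1+1) = k*k+4*k+4 := by ring
            omega
        rw [hsq] at hbound
        omega
      · have hsq : Nat.sqrt (k*(k+1)+i+1) = k := by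
          apply sqrt_eq_of
          · omega
          · omega
        rw [hsq] at hbound
        have hk1 : 1 ≤ k := by omega
        omega
    obtain ⟨hmA, hmB, hmC⟩ := hm1
    have hmain := genFrob_triple_even m u i hmC hmA hmB
    rw [huik] at hmain
    have hpair := genFrob_pair_eq m i hmC
    rw [htn, hx, hy]
    constructor
    · rw [hmain, hpair]
      push_cast
      ring
    · rw [hmain]
      push_cast
      ring
  · -- odd case
    push_neg at hik
    set u := 2*k+1-i with hu
    set x := i-k-1 with hxdef
    have hxu : x + u = k := by omega
    have hx : xEvenN k i = x := by rw [xEvenN, if_neg (by omega)]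
    have hy : yEvenN k i = 2*u+1 := by rw [yEvenN, if_neg (by omega)]; omega
    have hm1 : 3*(x+u) < m ∧ 0 < m := by
      have hsq : Nat.sqrt (k*(k+1)+i+1) = k+1 := by
        apply sqrt_eq_of
        · omega
        · have e2 : (k+1+1)*(k+1+1) = k*k+4*k+4 := by ring
          omega
      rw [hsq] at hbound
      omega
    obtain ⟨hmA, hmC⟩ := hm1
    have hmain := genFrob_triple_odd m u x hmC hmA
    have hseq : (x+u)*(x+u+1) + ((x+u)+x+1) = k*(k+1)+i := by
      rw [hxu]
      omega
    rw [hseq] at hmain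
    have hpair := genFrob_pair_eq m x hmC
    rw [htn, hx, hy]
    constructor
    · rw [hmain, hpair]
      push_cast
      ring
    · rw [hmain]
      push_cast
      ring
end

section
/- Let s ≥ 0 be an integer. For every odd integer n with n > N_s^odd, the generalized Frobenius number of the triple (t_n, (n+1)/2, (n+3)/2) satisfies g(t_n, (n+1)/2, (n+3)/2; s) = g((n+1)/2, (n+3)/2; x_s^odd) + y_s^odd·t_n = (x_s^odd + 1)(n+1)(n+3)/4 − (n+1)/2 − (n+3)/2 + y_s^odd·t_n. (Here (n+1)/2 = t_{n+1}/d_1 and (n+3)/2 = t_{n+2}/d_1 where d_1 = gcd(t_{n+1}, t_{n+2}) = n+2 for odd n.) -/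
open Finset

namespace Frob11

/-- closed form for `∑_{j<l} (j/2+1)` -/
def f (l : ℕ) : ℕ := (l / 2 + 1) * ((l + 1) / 2)

lemma f_succ (l : ℕ) : f (l + 1) = f l + (l / 2 + 1) := by
  rcases Nat.even_or_odd l with ⟨m, hm⟩ | ⟨m, hm⟩ <;> subst hm
  · have h0 : (m + m) / 2 = m := by omega
    have h1 : (m + m + 1) / 2 = m := by omega
    have h2 : (m + m + 1 + 1) / 2 = m + 1 := by omega
    simp only [f, h0, h1, h2]; ring
  · have h0 : (2 * m + 1) / 2 = m := by omega
    have h1 : (2 * m + 1 + 1) / 2 = m + 1 := by omega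
    have h2 : (2 * m + 1 + 1 + 1) / 2 = m + 1 := by omega
    simp only [f, h0, h1, h2]; ring

lemma f_mono : Monotone f := by
  apply monotone_nat_of_le_succ
  intro l; rw [f_succ]; omega

lemma sum_lb (c l : ℕ) :
    ∑ j ∈ range l, (j / 2 + 1 + if j % 2 = 1 ∧ c ≤ j / 2 then 1 else 0)
      = f l + (l / 2 - min (l / 2) c) := by
  induction l with
  | zero => simp [f]
  | succ l ih =>
      rw [Finset.sum_range_succ, ih, f_succ]
      split_ifs with h <;> omega

end Frob11

namespace Frob11

lemma mem_Icc_iff (a M v : ℕ) (ha : 1 ≤ a) :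
    v ∈ Icc ((M + a) / (a + 1)) (M / a) ↔ v * a ≤ M ∧ M ≤ v * (a + 1) := by
  rw [mem_Icc, Nat.le_div_iff_mul_le ha, Nat.div_le_iff_le_mul_add_pred (by omega : 0 < a + 1),
    and_comm]
  have h1 : (a + 1) * v = v * a + v := by ring
  have h2 : v * (a + 1) = v * a + v := by ring
  omega

lemma repCount_pair (a M : ℕ) (ha : 1 ≤ a) :
    repCount ![a, a + 1] M = (Icc ((M + a) / (a + 1)) (M / a)).card := by
  unfold repCount
  refine Finset.card_nbij' (fun x => (x 0 : ℕ) + (x 1 : ℕ))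
    (fun v => ![(⟨min (v - (M - v * a)) M, Nat.lt_succ_of_le (min_le_right _ _)⟩ : Fin (M + 1)),
      (⟨min (M - v * a) M, Nat.lt_succ_of_le (min_le_right _ _)⟩ : Fin (M + 1))]) ?_ ?_ ?_ ?_
  · intro x hx
    dsimp only
    simp only [Finset.mem_coe, mem_filter, mem_univ, true_and, Fin.sum_univ_two] at hx
    simp only [Matrix.cons_val_zero, Matrix.cons_val_one, Matrix.head_cons] at hx
    rw [Finset.mem_coe, mem_Icc_iff _ _ _ ha]
    have e : a * (x 0 : ℕ) + (a + 1) * (x 1 : ℕ)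
        = ((x 0 : ℕ) + (x 1 : ℕ)) * a + (x 1 : ℕ) := by ring
    have h2 : ((x 0 : ℕ) + (x 1 : ℕ)) * (a + 1)
        = ((x 0 : ℕ) + (x 1 : ℕ)) * a + ((x 0 : ℕ) + (x 1 : ℕ)) := by ring
    omega
  · intro v hv
    dsimp only
    rw [Finset.mem_coe, mem_Icc_iff _ _ _ ha] at hv
    obtain ⟨h1, h2⟩ := hv
    have hv2 : v * (a + 1) = v * a + v := by ring
    have hvM : v ≤ M := le_trans (Nat.le_mul_of_pos_right v ha) h1
    simp only [Finset.mem_coe, mem_filter, mem_univ, true_and]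
    rw [Fin.sum_univ_two]
    simp only [Matrix.cons_val_zero, Matrix.cons_val_one, Matrix.head_cons]
    have hmin1 : min (v - (M - v * a)) M = v - (M - v * a) := by omega
    have hmin2 : min (M - v * a) M = M - v * a := by omega
    rw [hmin1, hmin2]
    have h3 : a * (v - (M - v * a)) + (a + 1) * (M - v * a)
        = a * v + (M - v * a) := by
      zify [show M - v * a ≤ v by omega, h1]
      ring
    rw [h3]
    have h4 : a * v = v * a := by ring
    omega
  · intro x hx
    dsimp only
    simp only [Finset.mem_coe, mem_filter, mem_univ, true_and, Fin.sum_univ_two] at hx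
    simp only [Matrix.cons_val_zero, Matrix.cons_val_one, Matrix.head_cons] at hx
    have e : a * (x 0 : ℕ) + (a + 1) * (x 1 : ℕ)
        = ((x 0 : ℕ) + (x 1 : ℕ)) * a + (x 1 : ℕ) := by ring
    have hm : ((x 0 : ℕ) + (x 1 : ℕ)) * a ≥ (x 0 : ℕ) + (x 1 : ℕ) :=
      Nat.le_mul_of_pos_right _ ha
    have valA : min (((x 0 : ℕ) + (x 1 : ℕ)) - (M - ((x 0 : ℕ) + (x 1 : ℕ)) * a)) M
        = (x 0 : ℕ) := by omega
    have valB : min (M - ((x 0 : ℕ) + (x 1 : ℕ)) * a) M = (x 1 : ℕ) := by omega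
    funext j
    fin_cases j <;> apply Fin.ext <;> simp [valA, valB] <;> omega
  · intro v hv
    dsimp only
    rw [Finset.mem_coe, mem_Icc_iff _ _ _ ha] at hv
    obtain ⟨h1, h2⟩ := hv
    have hv2 : v * (a + 1) = v * a + v := by ring
    have hvM : v ≤ M := le_trans (Nat.le_mul_of_pos_right v ha) h1
    simp only [Matrix.cons_val_zero, Matrix.cons_val_one, Matrix.head_cons]
    omega

end Frob11

namespace Frob11

def S3 (a M : ℕ) : Finset ((_ : ℕ) × ℕ) :=
  (Icc ((M + a) / (a + 1)) (M / a)).sigma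
    (fun v => range ((v * (a + 1) - M) / (2 * a - 1) + 1))

lemma mem_S3 (a M : ℕ) (ha : 1 ≤ a) (p : (_ : ℕ) × ℕ) :
    p ∈ S3 a M ↔ p.1 * a ≤ M ∧ M + p.2 * (2 * a - 1) ≤ p.1 * (a + 1) := by
  obtain ⟨v, X⟩ := p
  rw [S3, mem_sigma, mem_Icc_iff _ _ _ ha, mem_range, Nat.lt_succ_iff,
    Nat.le_div_iff_mul_le (by omega : 0 < 2 * a - 1)]
  omega

lemma repCount_triple (a M : ℕ) (ha : 2 ≤ a) :
    repCount ![(2 * a - 1) * a, a, a + 1] M = (S3 a M).card := by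
  have ha1 : 1 ≤ a := by omega
  unfold repCount
  refine Finset.card_nbij'
    (fun x => ⟨(x 0 : ℕ) * (2 * a - 1) + (x 1 : ℕ) + (x 2 : ℕ), (x 0 : ℕ)⟩)
    (fun p => ![(⟨min p.2 M, Nat.lt_succ_of_le (min_le_right _ _)⟩ : Fin (M + 1)),
      (⟨min (p.1 - p.2 * (2 * a - 1) - (M - p.1 * a)) M,
        Nat.lt_succ_of_le (min_le_right _ _)⟩ : Fin (M + 1)),
      (⟨min (M - p.1 * a) M, Nat.lt_succ_of_le (min_le_right _ _)⟩ : Fin (M + 1))]) ?_ ?_ ?_ ?_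
  · intro x hx
    dsimp only
    simp only [Finset.mem_coe, mem_filter, mem_univ, true_and, Fin.sum_univ_three] at hx
    simp only [Matrix.cons_val_zero, Matrix.cons_val_one, Matrix.head_cons,
      Matrix.cons_val_two, Matrix.tail_cons] at hx
    rw [Finset.mem_coe, mem_S3 _ _ ha1]
    dsimp only
    have e : (2 * a - 1) * a * (x 0 : ℕ) + a * (x 1 : ℕ) + (a + 1) * (x 2 : ℕ)
        = ((x 0 : ℕ) * (2 * a - 1) + (x 1 : ℕ) + (x 2 : ℕ)) * a + (x 2 : ℕ) := by
      zify [show (1:ℕ) ≤ 2 * a by omega]; ring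
    have e2 : ((x 0 : ℕ) * (2 * a - 1) + (x 1 : ℕ) + (x 2 : ℕ)) * (a + 1)
        = ((x 0 : ℕ) * (2 * a - 1) + (x 1 : ℕ) + (x 2 : ℕ)) * a
          + ((x 0 : ℕ) * (2 * a - 1) + (x 1 : ℕ) + (x 2 : ℕ)) := by ring
    omega
  · intro p hp
    dsimp only
    rw [Finset.mem_coe, mem_S3 _ _ ha1] at hp
    obtain ⟨h1, h2⟩ := hp
    have hv2 : p.1 * (a + 1) = p.1 * a + p.1 := by ring
    have hvM : p.1 ≤ M := le_trans (Nat.le_mul_of_pos_right p.1 ha1) h1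
    have hXle : p.2 ≤ p.2 * (2 * a - 1) := Nat.le_mul_of_pos_right p.2 (by omega)
    simp only [Finset.mem_coe, mem_filter, mem_univ, true_and]
    rw [Fin.sum_univ_three]
    simp only [Matrix.cons_val_zero, Matrix.cons_val_one, Matrix.head_cons,
      Matrix.cons_val_two, Matrix.tail_cons]
    have hm1 : min p.2 M = p.2 := by omega
    have hm2 : min (p.1 - p.2 * (2 * a - 1) - (M - p.1 * a)) M
        = p.1 - p.2 * (2 * a - 1) - (M - p.1 * a) := by omega
    have hm3 : min (M - p.1 * a) M = M - p.1 * a := by omega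
    rw [hm1, hm2, hm3]
    zify [show (1:ℕ) ≤ 2 * a by omega, h1,
      show p.2 * (2 * a - 1) ≤ p.1 by omega,
      show M - p.1 * a ≤ p.1 - p.2 * (2 * a - 1) by omega]
    push_cast [show (1:ℕ) ≤ 2 * a by omega, h1, show p.2 * (2 * a - 1) ≤ p.1 by omega]
    ring
  · intro x hx
    dsimp only
    simp only [Finset.mem_coe, mem_filter, mem_univ, true_and, Fin.sum_univ_three] at hx
    simp only [Matrix.cons_val_zero, Matrix.cons_val_one, Matrix.head_cons,
      Matrix.cons_val_two, Matrix.tail_cons] at hx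
    have e : (2 * a - 1) * a * (x 0 : ℕ) + a * (x 1 : ℕ) + (a + 1) * (x 2 : ℕ)
        = ((x 0 : ℕ) * (2 * a - 1) + (x 1 : ℕ) + (x 2 : ℕ)) * a + (x 2 : ℕ) := by
      zify [show (1:ℕ) ≤ 2 * a by omega]; ring
    have hm : ((x 0 : ℕ) * (2 * a - 1) + (x 1 : ℕ) + (x 2 : ℕ)) * a
        ≥ (x 0 : ℕ) * (2 * a - 1) + (x 1 : ℕ) + (x 2 : ℕ) :=
      Nat.le_mul_of_pos_right _ ha1
    have hx0 : (x 0 : ℕ) ≤ (x 0 : ℕ) * (2 * a - 1) := Nat.le_mul_of_pos_right _ (by omega)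
    have v1 : min (x 0 : ℕ) M = (x 0 : ℕ) := by omega
    have v3 : min (M - ((x 0 : ℕ) * (2 * a - 1) + (x 1 : ℕ) + (x 2 : ℕ)) * a) M
        = (x 2 : ℕ) := by omega
    have v2 : min (((x 0 : ℕ) * (2 * a - 1) + (x 1 : ℕ) + (x 2 : ℕ))
          - (x 0 : ℕ) * (2 * a - 1)
          - (M - ((x 0 : ℕ) * (2 * a - 1) + (x 1 : ℕ) + (x 2 : ℕ)) * a)) M
        = (x 1 : ℕ) := by omega
    funext j
    fin_cases j <;> apply Fin.ext <;>
      simp [v1, v2, v3] <;> omega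
  · intro p hp
    obtain ⟨v, X⟩ := p
    dsimp only
    rw [Finset.mem_coe, mem_S3 _ _ ha1] at hp
    obtain ⟨h1, h2⟩ := hp
    dsimp only at h1 h2
    have hv2 : v * (a + 1) = v * a + v := by ring
    have hvM : v ≤ M := le_trans (Nat.le_mul_of_pos_right v ha1) h1
    have hXle : X ≤ X * (2 * a - 1) := Nat.le_mul_of_pos_right X (by omega)
    have hm1 : min X M = X := by omega
    have hm2 : min (v - X * (2 * a - 1) - (M - v * a)) M
        = v - X * (2 * a - 1) - (M - v * a) := by omega
    have hm3 : min (M - v * a) M = M - v * a := by omega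
    have hfst : X * (2 * a - 1) + (v - X * (2 * a - 1) - (M - v * a)) + (M - v * a) = v := by
      omega
    simp only [Matrix.cons_val_zero, Matrix.cons_val_one, Matrix.head_cons,
      Matrix.cons_val_two, Matrix.tail_cons, hm1, hm2, hm3, hfst]

end Frob11

namespace Frob11

def vv (a M : ℕ) : ℕ := (M + a) / (a + 1)
def LL (a M : ℕ) : ℕ := M / a + 1 - vv a M
def rr (a M : ℕ) : ℕ := vv a M * (a + 1) - M

lemma vv_mul_ge (a M : ℕ) : M ≤ vv a M * (a + 1) := by
  have h := Nat.lt_div_mul_add (a := M + a) (b := a + 1) (by omega)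
  unfold vv; omega

lemma vv_mul_le (a M : ℕ) : vv a M * (a + 1) ≤ M + a :=
  Nat.div_mul_le_self _ _

lemma rr_le (a M : ℕ) : rr a M ≤ a := by
  have h1 := vv_mul_ge a M; have h2 := vv_mul_le a M; unfold rr; omega

lemma rr_eq (a M : ℕ) : vv a M * (a + 1) = M + rr a M := by
  have h1 := vv_mul_ge a M; unfold rr; omega

lemma vv_le (a M : ℕ) (ha : 1 ≤ a) : vv a M ≤ M / a + 1 := by
  rcases Nat.eq_zero_or_pos (vv a M) with h | h
  · rw [h]; exact Nat.zero_le _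
  · obtain ⟨w, hw⟩ : ∃ w, vv a M = w + 1 := ⟨vv a M - 1, by omega⟩
    have h2 := vv_mul_le a M
    rw [hw] at h2
    have h3 : (w + 1) * (a + 1) = w * a + w + a + 1 := by ring
    have h4 : w * a ≤ M := by omega
    have h5 : w ≤ M / a := (Nat.le_div_iff_mul_le ha).mpr h4
    rw [hw]
    exact Nat.add_le_add_right h5 1

lemma M_lt (a M : ℕ) (ha : 1 ≤ a) : M < (vv a M + LL a M) * a := by
  have h1 := vv_le a M ha
  have h3 : vv a M + LL a M = M / a + 1 := Nat.add_sub_cancel' h1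
  rw [h3]
  have h4 := Nat.lt_div_mul_add (a := M) (b := a) ha
  have h5 : (M / a + 1) * a = M / a * a + a := by ring
  linarith

/-- key upper bound on `M` in terms of `LL` and `rr` -/
lemma M_le (a M : ℕ) (ha : 1 ≤ a) :
    M + (a + 1) ≤ LL a M * (a * (a + 1)) + rr a M * a := by
  have h1 := M_lt a M ha
  have h2 := rr_eq a M
  set v := vv a M with hv
  set L := LL a M with hL
  set r := rr a M with hr
  have e1 : (v + L) * a = v * a + L * a := by ring
  have e2 : v * (a + 1) = v * a + v := by ring
  have h3 : v + 1 ≤ L * a + r := by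
    rw [e1] at h1; rw [e2] at h2; omega
  have h4 : v * (a + 1) ≤ (L * a + r - 1) * (a + 1) :=
    Nat.mul_le_mul_right _ (by omega)
  zify [show (1:ℕ) ≤ L * a + r by omega] at h4
  zify
  nlinarith [h4, h2]

lemma card_S3_eq (a M : ℕ) (ha : 1 ≤ a) :
    (S3 a M).card
      = ∑ j ∈ range (LL a M), ((rr a M + j * (a + 1)) / (2 * a - 1) + 1) := by
  rw [S3, Finset.card_sigma]
  simp only [Finset.card_range]
  rw [← Finset.Ico_add_one_right_eq_Icc, Finset.sum_Ico_eq_sum_range]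
  have hv : (M + a) / (a + 1) = vv a M := rfl
  rw [hv]
  have hLL : M / a + 1 - vv a M = LL a M := rfl
  rw [hLL]
  apply Finset.sum_congr rfl
  intro j hj
  have h2 : (vv a M + j) * (a + 1) = vv a M * (a + 1) + j * (a + 1) := by
    ring
  have h3 := rr_eq a M
  congr 2
  omega

end Frob11

namespace Frob11

def GN (a l y : ℕ) : ℕ := l * (a * (a + 1)) + a * a - (3 * y * a + (a + 1))

section main
variable (a l y : ℕ) (ha : 2 ≤ a) (hya : 3 * y ≤ a) (hyl : 2 * y ≤ l)

include ha hya hyl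

lemma GN_sub_le : 3 * y * a + (a + 1) ≤ l * (a * (a + 1)) + a * a := by
  rcases Nat.eq_zero_or_pos y with hy | hy
  · subst hy
    have := Nat.zero_le (l * (a * (a + 1)))
    nlinarith
  · have h1 : 3 * y * a ≤ a * a := Nat.mul_le_mul_right a hya
    have h2 : 2 * (a * (a + 1)) ≤ l * (a * (a + 1)) := Nat.mul_le_mul_right _ (by omega)
    nlinarith

lemma V_pos : 3 * y + 1 ≤ l * a + a := by
  rcases Nat.eq_zero_or_pos y with hy | hy
  · have := Nat.zero_le (l * a); omega
  · have h2 : 2 * y * a ≤ l * a := Nat.mul_le_mul_right a hyl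
    nlinarith

lemma vv_GN : vv a (GN a l y) = l * a + a - (3 * y + 1) := by
  have hV := V_pos a l y ha hya hyl
  have hG := GN_sub_le a l y ha hya hyl
  unfold vv GN
  apply Nat.div_eq_of_lt_le
  · zify [hV, hG]
    nlinarith
  · zify [hV, hG]
    nlinarith

lemma v1_GN : GN a l y / a = l * a + a - (3 * y + 1) + l - 1 := by
  have hV := V_pos a l y ha hya hyl
  have hG := GN_sub_le a l y ha hya hyl
  have hl1 : 1 ≤ l * a + a - (3 * y + 1) + l := by
    rcases Nat.eq_zero_or_pos l with hl | hl
    · have : y = 0 := by omega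
      subst this; subst hl; omega
    · omega
  unfold GN
  apply Nat.div_eq_of_lt_le
  · zify [hV, hG, hl1]
    nlinarith
  · zify [hV, hG, hl1]
    nlinarith

lemma LL_GN : LL a (GN a l y) = l := by
  have h1 := vv_GN a l y ha hya hyl
  have h2 := v1_GN a l y ha hya hyl
  have hV := V_pos a l y ha hya hyl
  have hl1 : 1 ≤ l * a + a - (3 * y + 1) + l := by
    rcases Nat.eq_zero_or_pos l with hl | hl
    · have : y = 0 := by omega
      subst this; subst hl; omega
    · omega
  unfold LL
  omega

lemma rr_GN : rr a (GN a l y) = a - 3 * y := by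
  have h1 := vv_GN a l y ha hya hyl
  have h2 := rr_eq a (GN a l y)
  have hV := V_pos a l y ha hya hyl
  have hG := GN_sub_le a l y ha hya hyl
  rw [h1] at h2
  have hGz : ((GN a l y : ℤ))
      = (l : ℤ) * ((a : ℤ) * ((a : ℤ) + 1)) + (a : ℤ) * (a : ℤ)
        - (3 * (y : ℤ) * (a : ℤ) + ((a : ℤ) + 1)) := by
    unfold GN
    push_cast [hG]
    ring
  zify [hV] at h2
  zify [hya]
  nlinarith [h2, hGz]

end main

/-! ### termwise division bounds -/

lemma div_le_even (a r m : ℕ) (ha : 2 ≤ a) (h : r + 3 * m + 2 ≤ 2 * a) :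
    (r + 2 * m * (a + 1)) / (2 * a - 1) ≤ m := by
  rw [Nat.div_le_iff_le_mul_add_pred (by omega : 0 < 2 * a - 1)]
  zify [show (1:ℕ) ≤ 2 * a by omega, show (1:ℕ) ≤ 2 * a - 1 by omega]
  nlinarith

lemma div_le_odd0 (a r m : ℕ) (ha : 2 ≤ a) (h : r + 3 * m + 3 ≤ a) :
    (r + (2 * m + 1) * (a + 1)) / (2 * a - 1) ≤ m := by
  rw [Nat.div_le_iff_le_mul_add_pred (by omega : 0 < 2 * a - 1)]
  zify [show (1:ℕ) ≤ 2 * a by omega, show (1:ℕ) ≤ 2 * a - 1 by omega]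
  nlinarith

lemma div_le_odd1 (a r m : ℕ) (ha : 2 ≤ a) (h : r + 3 * m + 4 ≤ 3 * a) :
    (r + (2 * m + 1) * (a + 1)) / (2 * a - 1) ≤ m + 1 := by
  rw [Nat.div_le_iff_le_mul_add_pred (by omega : 0 < 2 * a - 1)]
  zify [show (1:ℕ) ≤ 2 * a by omega, show (1:ℕ) ≤ 2 * a - 1 by omega]
  nlinarith

lemma div_ge_half (a r j : ℕ) (ha : 2 ≤ a) : j / 2 ≤ (r + j * (a + 1)) / (2 * a - 1) := by
  rw [Nat.le_div_iff_mul_le (by omega : 0 < 2 * a - 1)]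
  have h1 : j / 2 * (2 * a - 1) ≤ j / 2 * (2 * (a + 1)) :=
    Nat.mul_le_mul_left _ (by omega)
  have h2 : j / 2 * (2 * (a + 1)) = (j / 2 * 2) * (a + 1) := by ring
  have h3 : (j / 2 * 2) * (a + 1) ≤ j * (a + 1) :=
    Nat.mul_le_mul_right _ (by omega)
  omega

lemma div_ge_extra (a r m : ℕ) (ha : 2 ≤ a) (h : a ≤ r + 3 * m + 2) :
    m + 1 ≤ (r + (2 * m + 1) * (a + 1)) / (2 * a - 1) := by
  rw [Nat.le_div_iff_mul_le (by omega : 0 < 2 * a - 1)]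
  zify [show (1:ℕ) ≤ 2 * a by omega]
  nlinarith

lemma sum_f (L : ℕ) : ∑ j ∈ range L, (j / 2 + 1) = f L := by
  induction L with
  | zero => simp [f]
  | succ L ih => rw [Finset.sum_range_succ, ih, f_succ]

end Frob11

namespace Frob11

section cards
variable (a l y : ℕ) (ha : 2 ≤ a) (hya : 3 * y ≤ a) (hyl : 2 * y ≤ l)
  (HE : 3 * ((l - 1) / 2) + 2 ≤ a + 3 * y) (HB : 3 * ((l - 2) / 2) + 4 ≤ 2 * a)

include ha hya hyl HE HB

lemma card_GN_le : (S3 a (GN a l y)).card ≤ f l + (l / 2 - y) := by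
  rw [card_S3_eq a _ (by omega), LL_GN a l y ha hya hyl, rr_GN a l y ha hya hyl]
  calc ∑ j ∈ range l, ((a - 3 * y + j * (a + 1)) / (2 * a - 1) + 1)
      ≤ ∑ j ∈ range l, (j / 2 + 1 + if j % 2 = 1 ∧ y ≤ j / 2 then 1 else 0) := by
        apply Finset.sum_le_sum
        intro j hj
        rw [Finset.mem_range] at hj
        rcases Nat.even_or_odd j with ⟨m, hm⟩ | ⟨m, hm⟩
        · subst hm
          have hj2 : (m + m) / 2 = m := by omega
          have hm' : m ≤ (l - 1) / 2 := by omega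
          have hd : (a - 3 * y + (m + m) * (a + 1)) / (2 * a - 1) ≤ m := by
            have : (m + m) * (a + 1) = 2 * m * (a + 1) := by ring
            rw [this]
            exact div_le_even a (a - 3 * y) m ha (by omega)
          rw [hj2]
          split_ifs <;> omega
        · subst hm
          have hj2 : (2 * m + 1) / 2 = m := by omega
          have hmod : (2 * m + 1) % 2 = 1 := by omega
          have hm' : m ≤ (l - 2) / 2 := by omega
          rw [hj2]
          by_cases hy : y ≤ m
          · have hd : (a - 3 * y + (2 * m + 1) * (a + 1)) / (2 * a - 1) ≤ m + 1 :=
              div_le_odd1 a (a - 3 * y) m ha (by omega)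
            split_ifs <;> omega
          · have hd : (a - 3 * y + (2 * m + 1) * (a + 1)) / (2 * a - 1) ≤ m :=
              div_le_odd0 a (a - 3 * y) m ha (by omega)
            split_ifs <;> omega
    _ = f l + (l / 2 - min (l / 2) y) := sum_lb y l
    _ ≤ f l + (l / 2 - y) := by omega

lemma card_gt (M : ℕ) (hM : GN a l y < M) :
    f l + (l / 2 - y) + 1 ≤ (S3 a M).card := by
  rw [card_S3_eq a _ (by omega)]
  by_cases hL : l + 1 ≤ LL a M
  · calc f l + (l / 2 - y) + 1 ≤ f (l + 1) := by
          rw [f_succ]; omega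
      _ ≤ f (LL a M) := f_mono hL
      _ = ∑ j ∈ range (LL a M), (j / 2 + 1) := (sum_f _).symm
      _ ≤ ∑ j ∈ range (LL a M), ((rr a M + j * (a + 1)) / (2 * a - 1) + 1) := by
          apply Finset.sum_le_sum
          intro j hj
          have := div_ge_half a (rr a M) j ha
          omega
  · by_cases hLr : LL a M = l ∧ a - 3 * y + 1 ≤ rr a M
    · obtain ⟨hLl, hrge⟩ := hLr
      have hy1 : 1 ≤ y := by
        have := rr_le a M
        by_contra hy0
        omega
      rw [hLl]
      calc f l + (l / 2 - y) + 1 ≤ f l + (l / 2 - min (l / 2) (y - 1)) := by omega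
        _ = ∑ j ∈ range l, (j / 2 + 1 + if j % 2 = 1 ∧ (y - 1) ≤ j / 2 then 1 else 0) :=
            (sum_lb (y - 1) l).symm
        _ ≤ ∑ j ∈ range l, ((rr a M + j * (a + 1)) / (2 * a - 1) + 1) := by
            apply Finset.sum_le_sum
            intro j hj
            rcases Nat.even_or_odd j with ⟨m, hm⟩ | ⟨m, hm⟩
            · have h1 := div_ge_half a (rr a M) j ha
              have : ¬ (j % 2 = 1) := by omega
              split_ifs <;> omega
            · subst hm
              have hj2 : (2 * m + 1) / 2 = m := by omega
              have hmod : (2 * m + 1) % 2 = 1 := by omega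
              rw [hj2]
              by_cases hym : y - 1 ≤ m
              · have hd : m + 1 ≤ (rr a M + (2 * m + 1) * (a + 1)) / (2 * a - 1) :=
                  div_ge_extra a (rr a M) m ha (by omega)
                split_ifs <;> omega
              · have h1 := div_ge_half a (rr a M) (2 * m + 1) ha
                rw [hj2] at h1
                split_ifs <;> omega
    · exfalso
      have hLle : LL a M ≤ l := by omega
      have hkey := M_le a M (by omega)
      have hrle := rr_le a M
      have hGz : ((GN a l y : ℤ))
          = (l : ℤ) * ((a : ℤ) * ((a : ℤ) + 1)) + (a : ℤ) * (a : ℤ)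
            - (3 * (y : ℤ) * (a : ℤ) + ((a : ℤ) + 1)) := by
        unfold GN
        push_cast [GN_sub_le a l y ha hya hyl]
        ring
      by_cases hLl : LL a M = l
      · have hrr : rr a M ≤ a - 3 * y := by
          by_contra hcon
          exact hLr ⟨hLl, by omega⟩
        rw [hLl] at hkey
        have h2 : (rr a M : ℤ) * a ≤ ((a : ℤ) - 3 * y) * a := by
          have := Nat.mul_le_mul_right a hrr
          zify [hya] at this
          exact this
        zify at hkey hM
        nlinarith [hkey, hM, hGz, h2]
      · have hL1 : LL a M ≤ l - 1 := by omega
        have hl1 : 1 ≤ l := by omega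
        have h2 : (LL a M : ℤ) * (a * (a + 1)) ≤ ((l : ℤ) - 1) * (a * (a + 1)) := by
          have := Nat.mul_le_mul_right (a * (a + 1)) hL1
          zify [hl1] at this
          exact this
        have h3 : (rr a M : ℤ) * a ≤ (a : ℤ) * a := by
          have := Nat.mul_le_mul_right a hrle
          zify at this
          exact this
        have h4 : 3 * (y : ℤ) * a ≤ (a : ℤ) * a := by
          have := Nat.mul_le_mul_right a hya
          zify at this
          exact this
        zify at hkey hM
        nlinarith [hkey, hM, hGz, h2, h3, h4]

end cards

end Frob11

namespace Frob11

def GP (a x : ℕ) : ℕ := (x + 1) * (a * (a + 1)) - (2 * a + 1)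

lemma GP_sub_le (a x : ℕ) (ha : 2 ≤ a) : 2 * a + 1 ≤ (x + 1) * (a * (a + 1)) := by
  have h : 1 * (a * (a + 1)) ≤ (x + 1) * (a * (a + 1)) :=
    Nat.mul_le_mul_right _ (by omega)
  nlinarith

lemma vv_GP (a x : ℕ) (ha : 2 ≤ a) : (GP a x + a) / (a + 1) = (x + 1) * a - 1 := by
  have hG := GP_sub_le a x ha
  have hxa : 1 ≤ (x + 1) * a := by nlinarith
  unfold GP
  apply Nat.div_eq_of_lt_le
  · zify [hG, hxa]; nlinarith
  · zify [hG, hxa]; nlinarith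

lemma v1_GP (a x : ℕ) (ha : 2 ≤ a) : GP a x / a = (x + 1) * (a + 1) - 3 := by
  have hG := GP_sub_le a x ha
  have hxa : 3 ≤ (x + 1) * (a + 1) := by nlinarith
  unfold GP
  apply Nat.div_eq_of_lt_le
  · zify [hG, hxa]; nlinarith
  · zify [hG, hxa]; nlinarith

lemma pair_value (a x : ℕ) (ha : 2 ≤ a) : repCount ![a, a + 1] (GP a x) = x := by
  rw [repCount_pair _ _ (by omega), vv_GP a x ha, v1_GP a x ha, Nat.card_Icc]
  have e : (x + 1) * (a + 1) = (x + 1) * a + (x + 1) := by ring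
  have hxa : x + 2 ≤ (x + 1) * a := by nlinarith
  set B := (x + 1) * a with hB
  set A := (x + 1) * (a + 1) with hA
  clear_value A B
  omega

lemma pair_gt (a x M : ℕ) (ha : 2 ≤ a) (h : GP a x < M) :
    x + 1 ≤ repCount ![a, a + 1] M := by
  rw [repCount_pair _ _ (by omega), Nat.card_Icc]
  have hq1 := vv_mul_ge a M
  have hq2 := vv_mul_le a M
  have hv : (M + a) / (a + 1) = vv a M := rfl
  rw [hv]
  have h2 : vv a M + x ≤ M / a := by
    rw [Nat.le_div_iff_mul_le (by omega : 0 < a)]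
    by_cases hq : (x + 1) * a ≤ vv a M
    · zify at hq1 hq2 hq ⊢
      nlinarith
    · have hG := GP_sub_le a x ha
      have hxa : 1 ≤ (x + 1) * a := by nlinarith
      have hqa : vv a M * a ≤ ((x + 1) * a - 1) * a :=
        Nat.mul_le_mul_right a (by omega)
      unfold GP at h
      zify [hG, hxa] at h hqa ⊢
      nlinarith
  exact le_tsub_of_add_le_left (by linarith)

lemma repCountZ_natCast {k : ℕ} (w : Fin k → ℕ) (N : ℕ) :
    repCountZ w (N : ℤ) = repCount w N := by
  simp [repCountZ]

lemma isGreatest_pair (a x : ℕ) (ha : 2 ≤ a) :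
    IsGreatest {m : ℤ | repCountZ ![a, a + 1] m ≤ x} (GP a x : ℤ) := by
  constructor
  · show repCountZ _ _ ≤ x
    rw [repCountZ_natCast, pair_value a x ha]
  · intro m hm
    simp only [Set.mem_setOf_eq] at hm
    by_cases h0 : 0 ≤ m
    · by_contra hgt
      push_neg at hgt
      have hN : GP a x < m.toNat := by omega
      rw [show m = (m.toNat : ℤ) by omega, repCountZ_natCast] at hm
      have := pair_gt a x m.toNat ha hN
      omega
    · have : (0:ℤ) ≤ (GP a x : ℤ) := Int.natCast_nonneg _
      omega

lemma genFrob_pair (a x : ℕ) (ha : 2 ≤ a) :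
    genFrob ![a, a + 1] x = (GP a x : ℤ) :=
  (isGreatest_pair a x ha).csSup_eq

lemma isGreatest_triple (a l y : ℕ) (ha : 2 ≤ a) (hya : 3 * y ≤ a) (hyl : 2 * y ≤ l)
    (HE : 3 * ((l - 1) / 2) + 2 ≤ a + 3 * y) (HB : 3 * ((l - 2) / 2) + 4 ≤ 2 * a) :
    IsGreatest {m : ℤ | repCountZ ![(2 * a - 1) * a, a, a + 1] m ≤ f l + (l / 2 - y)}
      (GN a l y : ℤ) := by
  constructor
  · show repCountZ _ _ ≤ _
    rw [repCountZ_natCast, repCount_triple _ _ ha]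
    exact card_GN_le a l y ha hya hyl HE HB
  · intro m hm
    simp only [Set.mem_setOf_eq] at hm
    by_cases h0 : 0 ≤ m
    · by_contra hgt
      push_neg at hgt
      have hN : GN a l y < m.toNat := by omega
      rw [show m = (m.toNat : ℤ) by omega, repCountZ_natCast, repCount_triple _ _ ha] at hm
      have := card_gt a l y ha hya hyl HE HB m.toNat hN
      omega
    · have : (0:ℤ) ≤ (GN a l y : ℤ) := Int.natCast_nonneg _
      omega

lemma genFrob_triple (a l y : ℕ) (ha : 2 ≤ a) (hya : 3 * y ≤ a) (hyl : 2 * y ≤ l)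
    (HE : 3 * ((l - 1) / 2) + 2 ≤ a + 3 * y) (HB : 3 * ((l - 2) / 2) + 4 ≤ 2 * a) :
    genFrob ![(2 * a - 1) * a, a, a + 1] (f l + (l / 2 - y)) = (GN a l y : ℤ) :=
  (isGreatest_triple a l y ha hya hyl HE HB).csSup_eq

/-! ### the degenerate case `a = 1` -/

lemma repCount_pos_pair (M : ℕ) : 0 < repCount ![1, 2] M := by
  rw [repCount]
  apply Finset.card_pos.mpr
  refine ⟨![(⟨M, by omega⟩ : Fin (M + 1)), (⟨0, by omega⟩ : Fin (M + 1))], ?_⟩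
  simp [Fin.sum_univ_two]

lemma repCount_pos_triple (M : ℕ) : 0 < repCount ![1, 1, 2] M := by
  rw [repCount]
  apply Finset.card_pos.mpr
  refine ⟨![(⟨M, by omega⟩ : Fin (M + 1)), (⟨0, by omega⟩ : Fin (M + 1)),
    (⟨0, by omega⟩ : Fin (M + 1))], ?_⟩
  simp [Fin.sum_univ_three]

lemma isGreatest_deg {k : ℕ} (w : Fin k → ℕ) (hw : ∀ M : ℕ, 0 < repCount w M) :
    IsGreatest {m : ℤ | repCountZ w m ≤ 0} (-1 : ℤ) := by
  constructor
  · show repCountZ w (-1) ≤ 0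
    rw [repCountZ, if_neg (by omega)]
  · intro m hm
    simp only [Set.mem_setOf_eq] at hm
    by_contra hgt
    push_neg at hgt
    have h0 : 0 ≤ m := by omega
    rw [show m = (m.toNat : ℤ) by omega, repCountZ_natCast] at hm
    have := hw m.toNat
    omega

end Frob11

namespace Frob11

lemma NOdd_k (s k i : ℕ) (hi : i ≤ 2 * k) (hs : s = k * (k + 1) + i) :
    NOdd s = 6 * (k : ℤ) - 3 := by
  have h1 : 2 * k + 1 ≤ Nat.sqrt (4 * s + 5) := Nat.le_sqrt.mpr (by nlinarith)
  have h2 : Nat.sqrt (4 * s + 5) < 2 * k + 3 := Nat.sqrt_lt.mpr (by nlinarith)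
  unfold NOdd
  have h3 : (Nat.sqrt (4 * s + 5) - 1) / 2 = k := by omega
  rw [h3]

lemma NOdd_top (s k : ℕ) (hs : s = k * (k + 1) + (2 * k + 1)) :
    NOdd s = 6 * (k : ℤ) + 3 := by
  have he : 4 * s + 5 = (2 * k + 3) * (2 * k + 3) := by subst hs; ring
  unfold NOdd
  rw [he, Nat.sqrt_eq]
  have h3 : (2 * k + 3 - 1) / 2 = k + 1 := by omega
  rw [h3]
  push_cast
  ring

lemma f_even (k : ℕ) : f (2 * k) = (k + 1) * k := by
  have h1 : 2 * k / 2 = k := by omega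
  have h2 : (2 * k + 1) / 2 = k := by omega
  unfold f
  rw [h1, h2]

lemma f_odd (k : ℕ) : f (2 * k + 1) = (k + 1) * (k + 1) := by
  have h1 : (2 * k + 1) / 2 = k := by omega
  have h2 : (2 * k + 1 + 1) / 2 = k + 1 := by omega
  unfold f
  rw [h1, h2]

lemma GN_int (a l y : ℕ) (ha : 2 ≤ a) (hya : 3 * y ≤ a) (hyl : 2 * y ≤ l) :
    (GN a l y : ℤ) = (l : ℤ) * ((a : ℤ) * ((a : ℤ) + 1)) + (a : ℤ) * (a : ℤ)
      - (3 * (y : ℤ) * (a : ℤ) + ((a : ℤ) + 1)) := by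
  unfold GN
  push_cast [GN_sub_le a l y ha hya hyl]
  ring

lemma GP_int (a x : ℕ) (ha : 2 ≤ a) :
    (GP a x : ℤ) = ((x : ℤ) + 1) * ((a : ℤ) * ((a : ℤ) + 1)) - (2 * (a : ℤ) + 1) := by
  unfold GP
  push_cast [GP_sub_le a x ha]
  ring

lemma GN_eq_GP_add (a l y x : ℕ) (ha : 2 ≤ a) (hya : 3 * y ≤ a) (hyl : 2 * y ≤ l)
    (hx : x + 2 * y = l) :
    (GN a l y : ℤ) = (GP a x : ℤ) + ((y * ((2 * a - 1) * a) : ℕ) : ℤ) := by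
  rw [GN_int a l y ha hya hyl, GP_int a x ha]
  have hc : ((y * ((2 * a - 1) * a) : ℕ) : ℤ)
      = (y : ℤ) * ((2 * (a : ℤ) - 1) * (a : ℤ)) := by
    push_cast [show (1:ℕ) ≤ 2 * a by omega]
    ring
  rw [hc]
  have hl : (l : ℤ) = (x : ℤ) + 2 * (y : ℤ) := by
    exact_mod_cast congrArg (Nat.cast : ℕ → ℤ) hx.symm
  rw [hl]
  ring

lemma GP_div_form (a x : ℕ) (ha : 2 ≤ a) :
    (GP a x : ℤ) = ((x : ℤ) + 1) * ((2 * (a : ℤ)) * (2 * (a : ℤ) + 2)) / 4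
      - (2 * (a : ℤ)) / 2 - (2 * (a : ℤ) + 2) / 2 := by
  have h1 : ((x : ℤ) + 1) * ((2 * (a : ℤ)) * (2 * (a : ℤ) + 2))
      = (((x : ℤ) + 1) * ((a : ℤ) * ((a : ℤ) + 1))) * 4 := by ring
  have h2 : (2 * (a : ℤ) + 2) = 2 * ((a : ℤ) + 1) := by ring
  rw [h1, Int.mul_ediv_cancel _ (by norm_num), h2,
    Int.mul_ediv_cancel_left _ (by norm_num : (2:ℤ) ≠ 0),
    Int.mul_ediv_cancel_left _ (by norm_num : (2:ℤ) ≠ 0)]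
  rw [GP_int a x ha]
  ring

end Frob11

open Frob11

/-- with `s = k(k+1) + i`, `0 ≤ i ≤ 2k+1`, for odd `n > N_s^odd`,
`g(t_n, (n+1)/2, (n+3)/2; s) = g((n+1)/2, (n+3)/2; x_s^odd) + y_s^odd·t_n
  = (x_s^odd + 1)(n+1)(n+3)/4 - (n+1)/2 - (n+3)/2 + y_s^odd·t_n`. -/
theorem stmt_11 (s k i n : ℕ) (hi : i ≤ 2 * k + 1) (hs : s = k * (k + 1) + i)
    (hn : Odd n) (hbound : (n : ℤ) > NOdd s) :
    genFrob ![t n, (n + 1) / 2, (n + 3) / 2] s =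
        genFrob ![(n + 1) / 2, (n + 3) / 2] (xOddN k i) + ((yOddN k i * t n : ℕ) : ℤ) ∧
    genFrob ![t n, (n + 1) / 2, (n + 3) / 2] s =
        ((xOddN k i : ℤ) + 1) * (((n : ℤ) + 1) * ((n : ℤ) + 3)) / 4
          - ((n : ℤ) + 1) / 2 - ((n : ℤ) + 3) / 2 + ((yOddN k i * t n : ℕ) : ℤ) := by
  obtain ⟨c, hc⟩ := hn
  have h1 : (n + 1) / 2 = c + 1 := by omega
  have h3 : (n + 3) / 2 = (c + 1) + 1 := by omega
  have ht : t n = (2 * (c + 1) - 1) * (c + 1) := by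
    have e : (2 * c + 1) * (2 * c + 1 + 1) = ((2 * c + 1) * (c + 1)) * 2 := by ring
    have h4 : t n = (2 * c + 1) * (c + 1) := by
      unfold t
      rw [hc, e]
      exact Nat.mul_div_cancel _ (by omega)
    have h5 : 2 * (c + 1) - 1 = 2 * c + 1 := by omega
    rw [h4, h5]
  rw [h1, h3, ht]
  set a := c + 1 with hadef
  by_cases ha : 2 ≤ a
  · -- main case
    by_cases hik : i ≤ k
    · -- l = 2k, y = k - i, x = 2i
      have hNO : NOdd s = 6 * (k : ℤ) - 3 := NOdd_k s k i (by omega) hs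
      rw [hNO] at hbound
      have ha3k : 3 * k ≤ a := by omega
      have hya : 3 * (k - i) ≤ a := by omega
      have hyl : 2 * (k - i) ≤ 2 * k := by omega
      have HE : 3 * ((2 * k - 1) / 2) + 2 ≤ a + 3 * (k - i) := by omega
      have HB : 3 * ((2 * k - 2) / 2) + 4 ≤ 2 * a := by omega
      have hsval : f (2 * k) + ((2 * k) / 2 - (k - i)) = s := by
        rw [f_even]
        have e : (k + 1) * k = k * (k + 1) := by ring
        omega
      have hxv : xOddN k i = 2 * i := if_pos hik
      have hyv : yOddN k i = k - i := if_pos hik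
      have hg3 : genFrob ![(2 * a - 1) * a, a, a + 1] s = (GN a (2 * k) (k - i) : ℤ) := by
        rw [← hsval]
        exact genFrob_triple a (2 * k) (k - i) ha hya hyl HE HB
      have e1 : ((n : ℤ) + 1) = 2 * (a : ℤ) := by omega
      have e2 : ((n : ℤ) + 3) = 2 * (a : ℤ) + 2 := by omega
      constructor
      · rw [hg3, hxv, hyv, genFrob_pair a (2 * i) ha]
        exact GN_eq_GP_add a (2 * k) (k - i) (2 * i) ha hya hyl (by omega)
      · rw [hg3, hxv, hyv, e1, e2, ← GP_div_form a (2 * i) ha]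
        exact GN_eq_GP_add a (2 * k) (k - i) (2 * i) ha hya hyl (by omega)
    · -- l = 2k+1, y = 2k+1-i, x = 2(i-k)-1
      have hOr : 3 * k + 3 ≤ a ∨ (i ≤ 2 * k ∧ 3 * k ≤ a) := by
        by_cases hit : i = 2 * k + 1
        · left
          have hNO : NOdd s = 6 * (k : ℤ) + 3 := NOdd_top s k (by omega)
          rw [hNO] at hbound
          omega
        · right
          have hNO : NOdd s = 6 * (k : ℤ) - 3 := NOdd_k s k i (by omega) hs
          rw [hNO] at hbound
          omega
      have hya : 3 * (2 * k + 1 - i) ≤ a := by omega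
      have hyl : 2 * (2 * k + 1 - i) ≤ 2 * k + 1 := by omega
      have HE : 3 * ((2 * k + 1 - 1) / 2) + 2 ≤ a + 3 * (2 * k + 1 - i) := by omega
      have HB : 3 * ((2 * k + 1 - 2) / 2) + 4 ≤ 2 * a := by omega
      have hsval : f (2 * k + 1) + ((2 * k + 1) / 2 - (2 * k + 1 - i)) = s := by
        rw [f_odd]
        have e : (k + 1) * (k + 1) = k * k + 2 * k + 1 := by ring
        have e2 : k * (k + 1) = k * k + k := by ring
        omega
      have hxv : xOddN k i = 2 * (i - k) - 1 := if_neg (by omega)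
      have hyv : yOddN k i = 2 * k + 1 - i := if_neg (by omega)
      have hg3 : genFrob ![(2 * a - 1) * a, a, a + 1] s
          = (GN a (2 * k + 1) (2 * k + 1 - i) : ℤ) := by
        rw [← hsval]
        exact genFrob_triple a (2 * k + 1) (2 * k + 1 - i) ha hya hyl HE HB
      have e1 : ((n : ℤ) + 1) = 2 * (a : ℤ) := by omega
      have e2 : ((n : ℤ) + 3) = 2 * (a : ℤ) + 2 := by omega
      constructor
      · rw [hg3, hxv, hyv, genFrob_pair a (2 * (i - k) - 1) ha]
        exact GN_eq_GP_add a (2 * k + 1) (2 * k + 1 - i) (2 * (i - k) - 1) ha hya hyl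
          (by omega)
      · rw [hg3, hxv, hyv, e1, e2, ← GP_div_form a (2 * (i - k) - 1) ha]
        exact GN_eq_GP_add a (2 * k + 1) (2 * k + 1 - i) (2 * (i - k) - 1) ha hya hyl
          (by omega)
  · -- degenerate case a = 1, s = 0
    have ha1 : a = 1 := by omega
    have hs0 : s = 0 := by
      by_contra hs0
      have h9 : 3 ≤ Nat.sqrt (4 * s + 5) := Nat.le_sqrt.mpr (by omega)
      have h10 : (3 : ℤ) ≤ NOdd s := by
        unfold NOdd
        have : 1 ≤ (Nat.sqrt (4 * s + 5) - 1) / 2 := by omega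
        omega
      have hn1 : n = 1 := by omega
      rw [hn1] at hbound
      omega
    have hkk : k ≤ k * (k + 1) := Nat.le_mul_of_pos_right k (by omega)
    have hk0 : k = 0 := by omega
    have hi0 : i = 0 := by omega
    rw [ha1, hs0, hk0, hi0]
    have hx0 : xOddN 0 0 = 0 := rfl
    have hy0 : yOddN 0 0 = 0 := rfl
    rw [hx0, hy0]
    norm_num
    have g3 : genFrob ![1, 1, 2] 0 = -1 :=
      (isGreatest_deg ![1, 1, 2] repCount_pos_triple).csSup_eq
    have g2 : genFrob ![1, 2] 0 = -1 :=
      (isGreatest_deg ![1, 2] repCount_pos_pair).csSup_eq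
    have hn1 : n = 1 := by omega
    rw [hn1, g3, g2]
    norm_num
end

section
/- For k ≥ 2, let A = (a_1, …, a_k) be a k-tuple of positive integers with gcd(a_1, …, a_k) = 1. Let ℓ = gcd(a_2, a_3, …, a_k) and write a_j = ℓ·a_j' for 2 ≤ j ≤ k. Then for every integer s ≥ 0, g(a_1, a_2, …, a_k; s) = ℓ·g(a_1, a_2', a_3', …, a_k'; s) + a_1(ℓ − 1). -/
open Finset

lemma finset_gcd_bezout {ι : Type*} [DecidableEq ι] (s : Finset ι) (f : ι → ℕ) :
    ∃ g : ι → ℤ, ((s.gcd f : ℕ) : ℤ) = ∑ i ∈ s, (f i : ℤ) * g i := by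
  induction s using Finset.induction with
  | empty => exact ⟨0, by simp⟩
  | @insert a s ha ih =>
    obtain ⟨g, hg⟩ := ih
    refine ⟨fun i => if i = a then Nat.gcdA (f a) (s.gcd f)
      else Nat.gcdB (f a) (s.gcd f) * g i, ?_⟩
    rw [Finset.gcd_insert, Finset.sum_insert ha]
    have hb := Nat.gcd_eq_gcd_ab (f a) (s.gcd f)
    simp only [if_pos rfl]
    have : ∀ i ∈ s, (f i : ℤ) * (if i = a then Nat.gcdA (f a) (s.gcd f)
        else Nat.gcdB (f a) (s.gcd f) * g i) = Nat.gcdB (f a) (s.gcd f) * ((f i : ℤ) * g i) := by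
      intro i hi
      rw [if_neg (by rintro rfl; exact ha hi)]; ring
    rw [Finset.sum_congr rfl this, ← Finset.mul_sum, ← hg]
    have : Nat.gcd (f a) (s.gcd f) = gcd (f a) (s.gcd f) := rfl
    rw [← this, hb]; simp [mul_comm]

lemma rep_large {k : ℕ} (b : Fin k → ℕ) (hb : Finset.univ.gcd b = 1) :
    ∃ F : ℕ, ∀ n, F ≤ n → ∃ x : Fin k → ℕ, ∑ i, b i * x i = n := by
  obtain ⟨g, hg⟩ := finset_gcd_bezout Finset.univ b
  rw [hb] at hg
  push_cast at hg
  set u : Fin k → ℕ := fun i => (g i).toNat with hu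
  set v : Fin k → ℕ := fun i => (-g i).toNat with hv
  set M : ℕ := ∑ i, b i * v i with hM
  have hMu : ∑ i, b i * u i = M + 1 := by
    have : ((∑ i, b i * u i : ℕ) : ℤ) = ((M + 1 : ℕ) : ℤ) := by
      push_cast [hM]
      have : ∀ i : Fin k, (b i : ℤ) * u i - (b i : ℤ) * v i = (b i : ℤ) * g i := by
        intro i
        have : (u i : ℤ) - (v i : ℤ) = g i := Int.toNat_sub_toNat_neg (g i)
        nlinarith [this]
      calc (∑ i, (b i : ℤ) * u i) = (∑ i, ((b i : ℤ) * v i + (b i : ℤ) * g i)) := by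
            refine Finset.sum_congr rfl fun i _ => ?_
            linarith [this i]
        _ = (∑ i, (b i : ℤ) * v i) + ∑ i, (b i : ℤ) * g i := Finset.sum_add_distrib
        _ = (∑ i, (b i : ℤ) * v i) + 1 := by rw [← hg]
    exact_mod_cast this
  refine ⟨M * M, fun n hn => ?_⟩
  rcases Nat.eq_zero_or_pos M with hM0 | hM0
  · refine ⟨fun i => n * u i, ?_⟩
    calc ∑ i, b i * (n * u i) = n * ∑ i, b i * u i := by
          rw [Finset.mul_sum]; exact Finset.sum_congr rfl fun i _ => by ring
      _ = n := by rw [hMu, hM0]; ring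
  · obtain ⟨q, r, hrM, hkey⟩ : ∃ q r : ℕ, r < M ∧ M * q + r = n - M * M :=
      ⟨(n - M * M) / M, (n - M * M) % M, Nat.mod_lt _ hM0, Nat.div_add_mod _ _⟩
    have hn' : M * M + (M * q + r) = n := by rw [hkey]; omega
    obtain ⟨w, hw⟩ : ∃ w : ℕ, w = M + q - r := ⟨_, rfl⟩
    refine ⟨fun i => w * v i + r * u i, ?_⟩
    have : ∑ i, b i * (w * v i + r * u i) = w * M + r * (M + 1) := by
      rw [hM, ← hMu, Finset.mul_sum, Finset.mul_sum, ← Finset.sum_add_distrib]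
      exact Finset.sum_congr rfl fun i _ => by ring
    rw [this]
    have hwr : w + r = M + q := by omega
    calc w * M + r * (M + 1) = (w + r) * M + r := by ring
      _ = (M + q) * M + r := by rw [hwr]
      _ = n := by nlinarith [hn']

lemma decomp_aux (a1 l : ℕ) (cop : Nat.Coprime a1 l) (hl : 0 < l) (x0 r : ℕ) (hr : r < l)
    (T M : ℤ) (h : (a1:ℤ) * x0 + l * T = l * M + a1 * r) :
    ∃ q : ℕ, (x0 : ℤ) = r + l * q ∧ (a1:ℤ) * q + T = M := by
  have hcop : IsCoprime (l : ℤ) (a1 : ℤ) := by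
    rw [Int.isCoprime_iff_gcd_eq_one]
    simpa [Int.gcd, Nat.gcd_comm] using cop
  have hdvd : (l:ℤ) ∣ (a1:ℤ) * ((x0:ℤ) - r) := ⟨M - T, by linarith [h]⟩
  have hd : (l:ℤ) ∣ ((x0:ℤ) - r) := hcop.dvd_of_dvd_mul_left hdvd
  obtain ⟨q, hq⟩ := hd
  have hq0 : 0 ≤ q := by
    by_contra hneg
    push_neg at hneg
    have h1 : q ≤ -1 := by omega
    have h2 : (l:ℤ) * q ≤ (l:ℤ) * (-1) := by
      apply mul_le_mul_of_nonneg_left h1 (by positivity)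
    omega
  refine ⟨q.toNat, ?_, ?_⟩
  · rw [Int.toNat_of_nonneg hq0]; linarith
  · rw [Int.toNat_of_nonneg hq0]
    have hlne : (l:ℤ) ≠ 0 := by exact_mod_cast hl.ne'
    have h3 : (l:ℤ) * ((a1:ℤ) * q + T) = (l:ℤ) * M := by
      linear_combination h - (a1:ℤ) * hq
    exact mul_left_cancel₀ hlne h3

def fwdMap (k l r m n : ℕ) (x : Fin (k+1) → Fin (n+1)) : Fin (k+1) → Fin (m+1) :=
  Fin.cons ⟨min (((x 0 : ℕ) - r) / l) m, by omega⟩ (fun j => ⟨min (x j.succ : ℕ) m, by omega⟩)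

def bwdMap (k l r m n : ℕ) (y : Fin (k+1) → Fin (m+1)) : Fin (k+1) → Fin (n+1) :=
  Fin.cons ⟨min (r + l * (y 0 : ℕ)) n, by omega⟩ (fun j => ⟨min (y j.succ : ℕ) n, by omega⟩)

@[simp] lemma fwdMap_zero (k l r m n : ℕ) (x : Fin (k+1) → Fin (n+1)) :
    (fwdMap k l r m n x 0 : ℕ) = min (((x 0 : ℕ) - r) / l) m := rfl
@[simp] lemma fwdMap_succ (k l r m n : ℕ) (x : Fin (k+1) → Fin (n+1)) (j : Fin k) :
    (fwdMap k l r m n x j.succ : ℕ) = min (x j.succ : ℕ) m := by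
  simp [fwdMap]
@[simp] lemma bwdMap_zero (k l r m n : ℕ) (y : Fin (k+1) → Fin (m+1)) :
    (bwdMap k l r m n y 0 : ℕ) = min (r + l * (y 0 : ℕ)) n := rfl
@[simp] lemma bwdMap_succ (k l r m n : ℕ) (y : Fin (k+1) → Fin (m+1)) (j : Fin k) :
    (bwdMap k l r m n y j.succ : ℕ) = min (y j.succ : ℕ) n := by
  simp [bwdMap]

lemma count_bij {k : ℕ} (a1 l : ℕ) (a a' : Fin k → ℕ) (cop : Nat.Coprime a1 l)
    (hl : 0 < l) (ha1 : 0 < a1) (ha' : ∀ j, 0 < a' j) (haa : ∀ j, a j = l * a' j)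
    (m r : ℕ) (hr : r < l) :
    repCount (Fin.cons a1 a) (l * m + a1 * r) = repCount (Fin.cons a1 a') m := by
  set n := l * m + a1 * r with hn
  have hmn : m ≤ n := le_trans (Nat.le_mul_of_pos_left m hl) (Nat.le_add_right _ _)
  -- facts about elements of the first set
  have key1 : ∀ x : Fin (k+1) → Fin (n+1), (∑ i, (Fin.cons a1 a : Fin (k+1) → ℕ) i * (x i : ℕ)) = n →
      (x 0 : ℕ) = r + l * (((x 0 : ℕ) - r) / l) ∧
      a1 * (((x 0 : ℕ) - r) / l) + ∑ j : Fin k, a' j * (x j.succ : ℕ) = m ∧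
      ((x 0 : ℕ) - r) / l ≤ m ∧ ∀ j : Fin k, (x j.succ : ℕ) ≤ m := by
    intro x hx
    rw [Fin.sum_univ_succ] at hx
    simp only [Fin.cons_zero, Fin.cons_succ] at hx
    have hsum : (∑ j : Fin k, a j * (x j.succ : ℕ)) = l * ∑ j : Fin k, a' j * (x j.succ : ℕ) := by
      rw [Finset.mul_sum]
      exact Finset.sum_congr rfl fun j _ => by rw [haa j]; ring
    rw [hsum] at hx
    set S : ℕ := ∑ j : Fin k, a' j * (x j.succ : ℕ) with hS
    have hxz : (a1:ℤ) * (x 0 : ℕ) + l * (S:ℤ) = l * (m:ℤ) + a1 * r := by exact_mod_cast congrArg (Nat.cast : ℕ → ℤ) hx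
    obtain ⟨q, hq1, hq2⟩ := decomp_aux a1 l cop hl (x 0 : ℕ) r hr (S:ℤ) (m:ℤ) hxz
    have hq1' : (x 0 : ℕ) = r + l * q := by exact_mod_cast hq1
    have hq2' : a1 * q + S = m := by exact_mod_cast hq2
    have hqdiv : ((x 0 : ℕ) - r) / l = q := by
      rw [hq1', Nat.add_sub_cancel_left, Nat.mul_div_cancel_left _ hl]
    constructor
    · rw [hqdiv]; exact hq1'
    refine ⟨by rw [hqdiv]; exact hq2', by rw [hqdiv]; nlinarith, fun j => ?_⟩
    have h1 : a' j * (x j.succ : ℕ) ≤ S :=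
      Finset.single_le_sum (f := fun j => a' j * (x j.succ : ℕ)) (fun _ _ => Nat.zero_le _)
        (Finset.mem_univ j)
    have h2 : (x j.succ : ℕ) ≤ a' j * (x j.succ : ℕ) := Nat.le_mul_of_pos_left _ (ha' j)
    omega
  -- facts about elements of the second set
  have key2 : ∀ y : Fin (k+1) → Fin (m+1), (∑ i, (Fin.cons a1 a' : Fin (k+1) → ℕ) i * (y i : ℕ)) = m →
      r + l * (y 0 : ℕ) ≤ n ∧
      a1 * (r + l * (y 0 : ℕ)) + ∑ j : Fin k, a j * (y j.succ : ℕ) = n := by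
    intro y hy
    rw [Fin.sum_univ_succ] at hy
    simp only [Fin.cons_zero, Fin.cons_succ] at hy
    have hsum : (∑ j : Fin k, a j * (y j.succ : ℕ)) = l * ∑ j : Fin k, a' j * (y j.succ : ℕ) := by
      rw [Finset.mul_sum]
      exact Finset.sum_congr rfl fun j _ => by rw [haa j]; ring
    constructor
    · have h1 : l * (y 0 : ℕ) ≤ l * m := Nat.mul_le_mul_left _ (Fin.is_le _)
      have h2 : r ≤ a1 * r := Nat.le_mul_of_pos_left r ha1
      rw [hn]; omega
    · rw [hsum, hn]; nlinarith [hy]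
  unfold repCount
  refine Finset.card_bij' (fun x _ => fwdMap k l r m n x) (fun y _ => bwdMap k l r m n y)
    ?_ ?_ ?_ ?_
  · intro x hx
    simp only [Finset.mem_filter, Finset.mem_univ, true_and] at hx ⊢
    obtain ⟨he, hsum, hqle, hxle⟩ := key1 x hx
    rw [Fin.sum_univ_succ]
    simp only [Fin.cons_zero, Fin.cons_succ, fwdMap_zero, fwdMap_succ]
    rw [min_eq_left hqle]
    rw [Finset.sum_congr rfl (fun j _ => by rw [min_eq_left (hxle j)] :
      ∀ j ∈ Finset.univ, a' j * min (x j.succ : ℕ) m = a' j * (x j.succ : ℕ))]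
    exact hsum
  · intro y hy
    simp only [Finset.mem_filter, Finset.mem_univ, true_and] at hy ⊢
    obtain ⟨hle, hsum⟩ := key2 y hy
    have hb : ∀ j : Fin k, (y j.succ : ℕ) ≤ n := fun j => le_trans (Fin.is_le _) hmn
    rw [Fin.sum_univ_succ]
    simp only [Fin.cons_zero, Fin.cons_succ, bwdMap_zero, bwdMap_succ]
    rw [min_eq_left hle]
    rw [Finset.sum_congr rfl (fun j _ => by rw [min_eq_left (hb j)] :
      ∀ j ∈ Finset.univ, a j * min (y j.succ : ℕ) n = a j * (y j.succ : ℕ))]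
    exact hsum
  · intro x hx
    simp only [Finset.mem_filter, Finset.mem_univ, true_and] at hx
    obtain ⟨he, hsum, hqle, hxle⟩ := key1 x hx
    funext i
    induction i using Fin.cases with
    | zero =>
      apply Fin.ext
      rw [bwdMap_zero]
      simp only [fwdMap_zero]
      rw [min_eq_left hqle, ← he]
      exact min_eq_left (Fin.is_le _)
    | succ j =>
      apply Fin.ext
      rw [bwdMap_succ]
      simp only [fwdMap_succ]
      rw [min_eq_left (hxle j)]
      exact min_eq_left (le_trans (hxle j) hmn)
  · intro y hy
    simp only [Finset.mem_filter, Finset.mem_univ, true_and] at hy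
    obtain ⟨hle, _⟩ := key2 y hy
    funext i
    induction i using Fin.cases with
    | zero =>
      apply Fin.ext
      rw [fwdMap_zero]
      simp only [bwdMap_zero]
      rw [min_eq_left hle, Nat.add_sub_cancel_left, Nat.mul_div_cancel_left _ hl]
      exact min_eq_left (Fin.is_le _)
    | succ j =>
      apply Fin.ext
      rw [fwdMap_succ]
      simp only [bwdMap_succ]
      rw [min_eq_left (le_trans (Fin.is_le (y j.succ)) hmn)]
      exact min_eq_left (Fin.is_le _)

lemma countZ_eq {k : ℕ} (a1 l : ℕ) (a a' : Fin k → ℕ) (cop : Nat.Coprime a1 l)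
    (hl : 0 < l) (ha1 : 0 < a1) (ha' : ∀ j, 0 < a' j) (haa : ∀ j, a j = l * a' j)
    (m : ℤ) (r : ℕ) (hr : r < l) :
    repCountZ (Fin.cons a1 a) ((l : ℤ) * m + (a1 : ℤ) * r) = repCountZ (Fin.cons a1 a') m := by
  rcases le_or_gt 0 m with hm | hm
  · obtain ⟨mn, rfl⟩ := Int.eq_ofNat_of_zero_le hm
    have h1 : ((l : ℤ) * mn + (a1 : ℤ) * r) = ((l * mn + a1 * r : ℕ) : ℤ) := by push_cast; ring
    rw [repCountZ, repCountZ, if_pos (by positivity), if_pos (by positivity), h1,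
      Int.toNat_natCast, Int.toNat_natCast]
    exact count_bij a1 l a a' cop hl ha1 ha' haa mn r hr
  · conv_rhs => rw [repCountZ]
    rw [if_neg (not_le.mpr hm)]
    rcases le_or_gt 0 ((l : ℤ) * m + (a1 : ℤ) * r) with hn | hn
    · rw [repCountZ, if_pos hn]
      rw [repCount, Finset.card_eq_zero, Finset.filter_eq_empty_iff]
      intro x _
      intro hx
      exfalso
      have hnz : ((((l : ℤ) * m + (a1 : ℤ) * r).toNat : ℕ) : ℤ) = (l : ℤ) * m + (a1 : ℤ) * r :=
        Int.toNat_of_nonneg hn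
      rw [Fin.sum_univ_succ] at hx
      simp only [Fin.cons_zero, Fin.cons_succ] at hx
      have hsum : (∑ j : Fin k, a j * (x j.succ : ℕ)) = l * ∑ j : Fin k, a' j * (x j.succ : ℕ) := by
        rw [Finset.mul_sum]
        exact Finset.sum_congr rfl fun j _ => by rw [haa j]; ring
      rw [hsum] at hx
      have hxz : (a1:ℤ) * ((x 0 : ℕ) : ℤ)
          + (l:ℤ) * ((∑ j : Fin k, a' j * (x j.succ : ℕ) : ℕ) : ℤ) = (l:ℤ) * m + (a1:ℤ) * r := by
        have hc := congrArg (Nat.cast : ℕ → ℤ) hx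
        rw [hnz] at hc
        push_cast at hc ⊢
        linarith [hc]
      obtain ⟨q, _, hq2⟩ := decomp_aux a1 l cop hl (x 0 : ℕ) r hr _ m hxz
      have h1 : (0:ℤ) ≤ (a1:ℤ) * q := by positivity
      have h2 : (0:ℤ) ≤ ((∑ j : Fin k, a' j * (x j.succ : ℕ) : ℕ) : ℤ) := by positivity
      linarith
    · rw [repCountZ, if_neg (not_le.mpr hn)]

lemma repCountZ_big {k : ℕ} (a1 : ℕ) (a' : Fin k → ℕ) (ha1 : 0 < a1) (ha' : ∀ j, 0 < a' j)
    (hg : Finset.univ.gcd a' = 1) (s : ℕ) :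
    ∃ B : ℤ, ∀ m : ℤ, B < m → s < repCountZ (Fin.cons a1 a') m := by
  obtain ⟨F, hF⟩ := rep_large a' hg
  refine ⟨((F + a1 * s : ℕ) : ℤ), fun m hm => ?_⟩
  have hm0 : (0:ℤ) ≤ m := le_trans (by positivity) (le_of_lt hm)
  obtain ⟨n, rfl⟩ := Int.eq_ofNat_of_zero_le hm0
  rw [repCountZ, if_pos hm0, Int.toNat_natCast]
  have hn : F + a1 * s < n := by exact_mod_cast hm
  -- choose representations
  have hrep : ∀ j : Fin (s+1), ∃ x : Fin k → ℕ, ∑ i, a' i * x i = n - a1 * (j : ℕ) := by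
    intro j
    apply hF
    have : a1 * (j : ℕ) ≤ a1 * s := Nat.mul_le_mul_left _ (Fin.is_le j)
    omega
  choose xr hxr using hrep
  have hxb : ∀ (j : Fin (s+1)) (i : Fin k), xr j i ≤ n := by
    intro j i
    have h1 : a' i * xr j i ≤ n - a1 * (j : ℕ) := by
      rw [← hxr j]
      exact Finset.single_le_sum (f := fun i => a' i * xr j i) (fun _ _ => Nat.zero_le _)
        (Finset.mem_univ i)
    have h2 : xr j i ≤ a' i * xr j i := Nat.le_mul_of_pos_left _ (ha' i)
    omega
  have hjn : ∀ j : Fin (s+1), (j : ℕ) < n + 1 := by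
    intro j
    have h1 : (j : ℕ) ≤ s := Fin.is_le j
    have h2 : s ≤ a1 * s := Nat.le_mul_of_pos_left _ ha1
    omega
  set ψ : Fin (s+1) → (Fin (k+1) → Fin (n+1)) :=
    fun j => Fin.cons ⟨(j : ℕ), hjn j⟩ (fun i => ⟨xr j i, by have := hxb j i; omega⟩) with hψ
  have hmem : ∀ j : Fin (s+1), ψ j ∈ Finset.univ.filter
      (fun x : Fin (k+1) → Fin (n+1) => ∑ i, (Fin.cons a1 a' : Fin (k+1) → ℕ) i * (x i : ℕ) = n) := by
    intro j
    simp only [Finset.mem_filter, Finset.mem_univ, true_and]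
    rw [Fin.sum_univ_succ]
    simp only [hψ, Fin.cons_zero, Fin.cons_succ]
    rw [hxr j]
    have : a1 * (j : ℕ) ≤ a1 * s := Nat.mul_le_mul_left _ (Fin.is_le j)
    omega
  have hinj : Set.InjOn ψ ↑(Finset.univ : Finset (Fin (s+1))) := by
    intro j1 _ j2 _ h
    have := congrFun h 0
    simp only [hψ, Fin.cons_zero] at this
    simp only [Fin.mk.injEq] at this
    exact Fin.ext this
  have hcard := Finset.card_le_card_of_injOn ψ (fun j _ => hmem j) hinj
  rw [Finset.card_univ, Fintype.card_fin] at hcard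
  unfold repCount
  exact hcard

/-- Beck–Kifer: for a tuple `(a₁, a₂, …, a_k)` of positive integers with
gcd `1`, with `ℓ = gcd(a₂, …, a_k)` and `a_j = ℓ a_j'`,
`g(a₁, a₂, …, a_k; s) = ℓ·g(a₁, a₂', …, a_k'; s) + a₁(ℓ - 1)`. -/
theorem stmt_13 (k : ℕ) (hk : 1 ≤ k) (a1 : ℕ) (a : Fin k → ℕ) (ha1 : 0 < a1)
    (ha : ∀ j, 0 < a j) (hgcd : Nat.gcd a1 (Finset.univ.gcd a) = 1)
    (a' : Fin k → ℕ) (ha' : ∀ j, a j = Finset.univ.gcd a * a' j) (s : ℕ) :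
    genFrob (Fin.cons a1 a) s =
      ((Finset.univ.gcd a : ℕ) : ℤ) * genFrob (Fin.cons a1 a') s
        + (a1 : ℤ) * (((Finset.univ.gcd a : ℕ) : ℤ) - 1) := by
  set l : ℕ := Finset.univ.gcd a with hl
  have hlpos : 0 < l := by
    rcases Nat.eq_zero_or_pos l with h0 | h
    · exfalso
      have h1 := (Finset.gcd_eq_zero_iff.mp h0) ⟨0, hk⟩ (Finset.mem_univ _)
      have h2 := ha ⟨0, hk⟩
      omega
    · exact h
  have cop : Nat.Coprime a1 l := hgcd
  have ha'pos : ∀ j, 0 < a' j := by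
    intro j
    have h := ha j
    rw [ha' j] at h
    rcases Nat.eq_zero_or_pos (a' j) with h0 | h1
    · rw [h0, mul_zero] at h; exact absurd h (lt_irrefl 0)
    · exact h1
  have hga' : Finset.univ.gcd a' = 1 := by
    have h1 : l = l * Finset.univ.gcd a' := by
      have ha2 : a = fun j => l * a' j := funext ha'
      calc l = Finset.univ.gcd a := hl
        _ = Finset.univ.gcd (fun j => l * a' j) := by rw [← ha2]
        _ = normalize l * Finset.univ.gcd a' := Finset.gcd_mul_left
        _ = l * Finset.univ.gcd a' := by simp
    nlinarith [h1, hlpos]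
  -- the two solution sets
  set S : Set ℤ := {m : ℤ | repCountZ (Fin.cons a1 a) m ≤ s} with hS
  set S' : Set ℤ := {m : ℤ | repCountZ (Fin.cons a1 a') m ≤ s} with hS'
  have hS'ne : S'.Nonempty := ⟨-1, by simp [hS', Set.mem_setOf_eq, repCountZ]⟩
  obtain ⟨B, hB⟩ := repCountZ_big a1 a' ha1 ha'pos hga' s
  have hS'bdd : BddAbove S' := by
    refine ⟨B, fun m hm => ?_⟩
    by_contra h
    push_neg at h
    exact absurd hm (by simp only [hS', Set.mem_setOf_eq, not_le]; exact hB m h)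
  have hg'mem : genFrob (Fin.cons a1 a') s ∈ S' := Int.csSup_mem hS'ne hS'bdd
  set g' : ℤ := genFrob (Fin.cons a1 a') s with hg'
  -- key transfer identity
  have hkey : ∀ (m : ℤ) (r : ℕ), r < l →
      repCountZ (Fin.cons a1 a) ((l : ℤ) * m + (a1 : ℤ) * r) = repCountZ (Fin.cons a1 a') m :=
    fun m r hr => countZ_eq a1 l a a' cop hlpos ha1 ha'pos ha' m r hr
  -- the candidate value
  set c : ℤ := (l : ℤ) * g' + (a1 : ℤ) * ((l : ℤ) - 1) with hc
  have hl1 : (((l - 1 : ℕ)) : ℤ) = (l : ℤ) - 1 := by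
    have : 1 ≤ l := hlpos
    push_cast [this]
    ring
  have hcmem : c ∈ S := by
    have h1 : repCountZ (Fin.cons a1 a) ((l : ℤ) * g' + (a1 : ℤ) * ((l - 1 : ℕ) : ℤ))
        = repCountZ (Fin.cons a1 a') g' := hkey g' (l - 1) (by omega)
    rw [hl1] at h1
    simpa only [hS, hS', Set.mem_setOf_eq, hc, h1] using hg'mem
  -- decomposition of arbitrary integers
  have hdecomp : ∀ x : ℤ, ∃ (m : ℤ) (r : ℕ), r < l ∧ x = (l : ℤ) * m + (a1 : ℤ) * r := by
    intro x
    have hb := Nat.gcd_eq_gcd_ab a1 l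
    rw [cop] at hb
    push_cast at hb
    set u := Nat.gcdA a1 l with hu
    set v := Nat.gcdB a1 l with hv
    have hlz : (0:ℤ) < (l:ℤ) := by exact_mod_cast hlpos
    have hr0 : 0 ≤ (u * x) % l := Int.emod_nonneg _ (ne_of_gt hlz)
    have hr1 : (u * x) % l < l := Int.emod_lt_of_pos _ hlz
    have hdm : (l:ℤ) * ((u * x) / l) + (u * x) % l = u * x := Int.mul_ediv_add_emod _ _
    refine ⟨(a1 : ℤ) * ((u * x) / l) + v * x, ((u * x) % l).toNat, ?_, ?_⟩
    · omega
    · rw [Int.toNat_of_nonneg hr0]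
      have hx1 : x = (a1 : ℤ) * (u * x) + (l : ℤ) * (v * x) := by
        calc x = ((a1:ℤ) * u + (l:ℤ) * v) * x := by rw [← hb]; ring
          _ = (a1 : ℤ) * (u * x) + (l : ℤ) * (v * x) := by ring
      calc x = (a1 : ℤ) * (u * x) + (l : ℤ) * (v * x) := hx1
        _ = (a1 : ℤ) * ((l:ℤ) * ((u * x) / l) + (u * x) % l) + (l : ℤ) * (v * x) := by rw [hdm]
        _ = (l : ℤ) * ((a1 : ℤ) * ((u * x) / l) + v * x) + (a1 : ℤ) * ((u * x) % l) := by ring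
  -- upper bound
  have hub : ∀ x ∈ S, x ≤ c := by
    intro x hx
    obtain ⟨m, r, hr, rfl⟩ := hdecomp x
    have hmem' : m ∈ S' := by
      simp only [hS', Set.mem_setOf_eq]
      rw [← hkey m r hr]
      simpa only [hS, Set.mem_setOf_eq] using hx
    have hm : m ≤ g' := le_csSup hS'bdd hmem'
    have h1 : (l : ℤ) * m ≤ (l : ℤ) * g' := by
      apply mul_le_mul_of_nonneg_left hm (by positivity)
    have h2 : (a1 : ℤ) * (r : ℤ) ≤ (a1 : ℤ) * ((l : ℤ) - 1) := by
      apply mul_le_mul_of_nonneg_left _ (by positivity)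
      have : (r : ℤ) < (l : ℤ) := by exact_mod_cast hr
      omega
    rw [hc]
    linarith
  have hSne : S.Nonempty := ⟨c, hcmem⟩
  have hSbdd : BddAbove S := ⟨c, hub⟩
  have : genFrob (Fin.cons a1 a) s = c :=
    le_antisymm (csSup_le hSne hub) (le_csSup hSbdd hcmem)
  rw [this, hc]
end

section
/- Let a, b be positive integers with gcd(a, b) = 1, let i, s ≥ 0 be integers, let c be a positive integer with c ≡ 0 (mod a) or c ≡ 0 (mod b), and let j be an integer. Then d(g(a, b; s) + j·c; a, b) = i if and only if g(a, b; i−1) < g(a, b; s) + j·c ≤ g(a, b; i), where g(a, b; −1) is interpreted as −∞ (so for i = 0 the condition is just g(a, b; s) + j·c ≤ g(a, b; 0)). -/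
open Finset

def pairSet (a b n : ℕ) : Finset (ℕ × ℕ) :=
  (range (n+1) ×ˢ range (n+1)).filter fun p => a * p.1 + b * p.2 = n

lemma repCount_pair_s14 (a b n : ℕ) : repCount ![a,b] n = (pairSet a b n).card := by
  unfold repCount pairSet
  apply Finset.card_bij (fun f _ => ((f 0 : ℕ), (f 1 : ℕ)))
  · intro f hf
    simp only [mem_filter, mem_univ, true_and, Fin.sum_univ_two] at hf
    simp only [mem_filter, mem_product, mem_range]
    refine ⟨⟨(f 0).isLt, (f 1).isLt⟩, ?_⟩
    simpa using hf
  · intro f hf g hg h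
    simp only [Prod.mk.injEq] at h
    funext x
    fin_cases x <;> [exact Fin.ext h.1; exact Fin.ext h.2]
  · intro p hp
    simp only [mem_filter, mem_product, mem_range] at hp
    refine ⟨![⟨p.1, hp.1.1⟩, ⟨p.2, hp.1.2⟩], ?_, rfl⟩
    simp only [mem_filter, mem_univ, true_and, Fin.sum_univ_two]
    simpa using hp.2

lemma pairSet_comm (a b n : ℕ) : (pairSet a b n).card = (pairSet b a n).card := by
  unfold pairSet
  apply Finset.card_bij (fun p _ => p.swap)
  · intro p hp; simp only [mem_filter, mem_product, mem_range, Prod.fst_swap, Prod.snd_swap] at *; omega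
  · intro p _ q _ h; exact Prod.swap_injective h
  · intro p hp; exact ⟨p.swap, by simp only [mem_filter, mem_product, mem_range, Prod.fst_swap, Prod.snd_swap] at *; omega, p.swap_swap⟩

lemma pairSet_card (a b : ℕ) (ha : 0 < a) (hb : 0 < b) (hab : Nat.Coprime a b)
    (n : ℕ) (hcl : a ∣ n + b) : (pairSet a b n).card = (n + b) / (a * b) := by
  obtain ⟨q, hq⟩ := hcl
  have hD : (n + b) / (a * b) = q / b := by
    rw [hq, ← Nat.div_div_eq_div_mul, Nat.mul_div_cancel_left _ ha]
  rw [hD, ← Finset.card_range (q / b)]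
  symm
  apply Finset.card_bij (fun t _ => ((q - b*(t+1), a*t + (a-1)) : ℕ × ℕ))
  · intro t ht
    simp only [mem_range] at ht
    have h1 : (t+1) * b ≤ q := (Nat.le_div_iff_mul_le hb).mp ht
    have hx : a * (q - b*(t+1)) + b * (a*t + (a-1)) = n := by
      have h2 : a * (q - b*(t+1)) = a*q - a*b*(t+1) := by
        rw [Nat.mul_sub]; ring_nf
      zify [h1, Nat.one_le_iff_ne_zero.mpr ha.ne', show a*b*(t+1) ≤ a*q by
        calc a*b*(t+1) = a*((t+1)*b) := by ring
        _ ≤ a*q := Nat.mul_le_mul_left a h1] at h2 ⊢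
      have hq' : (n : ℤ) + b = a * q := by exact_mod_cast hq
      linarith [h2]
    simp only [pairSet, mem_filter, mem_product, mem_range]
    have hxle : q - b*(t+1) ≤ n := le_trans (Nat.le_mul_of_pos_left _ ha) (by omega)
    have hyle : a*t + (a-1) ≤ n := le_trans (Nat.le_mul_of_pos_left _ hb) (by omega)
    exact ⟨⟨by omega, by omega⟩, hx⟩
  · intro t1 _ t2 _ h
    simp only [Prod.mk.injEq] at h
    have h2 : a * t1 = a * t2 := by omega
    exact Nat.eq_of_mul_eq_mul_left ha h2
  · intro p hp
    simp only [pairSet, mem_filter, mem_product, mem_range] at hp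
    obtain ⟨⟨hx1, hy1⟩, hxy⟩ := hp
    -- a ∣ p.2 + 1
    have hd1 : a ∣ b * (p.2 + 1) := by
      have : a * q = a * p.1 + b * (p.2 + 1) := by rw [← hq, ← hxy]; ring
      exact (Nat.dvd_add_right (Dvd.intro p.1 rfl)).mp ⟨q, by omega⟩
    have hd2 : a ∣ p.2 + 1 := hab.dvd_of_dvd_mul_left hd1
    obtain ⟨k, hk⟩ := hd2
    have hk1 : 1 ≤ k := by
      rcases Nat.eq_zero_or_pos k with h | h
      · rw [h, mul_zero] at hk; omega
      · exact h
    set t := k - 1 with htdef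
    have hkt : k = t + 1 := by omega
    have hy : p.2 = a*t + (a-1) := by
      have h1 : a * k = a*t + a := by rw [hkt]; ring
      omega
    have hqq : a * q = a * (p.1 + b*(t+1)) := by
      have h2 : a * (p.1 + b*(t+1)) = a * p.1 + b * (a * k) := by rw [hkt]; ring
      rw [h2, ← hk, ← hq, ← hxy]; ring
    have hq2 : q = p.1 + b*(t+1) := Nat.eq_of_mul_eq_mul_left ha hqq
    have hmem : t ∈ range (q / b) := by
      rw [mem_range]
      have : (t+1) * b ≤ q := by rw [hq2]; nlinarith
      have h3 : t+1 ≤ q/b := (Nat.le_div_iff_mul_le hb).mpr this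
      omega
    refine ⟨t, hmem, ?_⟩
    have hx2 : q - b*(t+1) = p.1 := by omega
    rw [hx2, ← hy]

lemma pairSet_card_ge (a b : ℕ) (ha : 0 < a) (hb : 0 < b) (hab : Nat.Coprime a b)
    (s m : ℕ) (hm : (s+1)*(a*b) + 1 ≤ m + a + b) : s + 1 ≤ (pairSet a b m).card := by
  haveI : NeZero b := ⟨hb.ne'⟩
  set u : ZMod b := (a : ZMod b)⁻¹ * (m : ZMod b) with hu
  set x0 := u.val with hx0def
  have hx0 : x0 < b := ZMod.val_lt u
  have hum : (a : ZMod b) * u = (m : ZMod b) := by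
    rw [hu, ← mul_assoc, ZMod.coe_mul_inv_eq_one a hab, one_mul]
  have hdvd0 : (b:ℤ) ∣ (m : ℤ) - a * x0 := by
    have h0 : ((m : ℤ) - a * x0 : ℤ) = ((m : ℕ) : ℤ) - ((a * x0 : ℕ) : ℤ) := by push_cast; ring
    rw [← ZMod.intCast_zmod_eq_zero_iff_dvd]
    push_cast
    rw [hx0def, ZMod.natCast_val, ZMod.cast_id, hum, sub_self]
  have key : ∀ t, t ≤ s → a*(x0 + t*b) ≤ m ∧ b ∣ m - a*(x0 + t*b) := by
    intro t ht
    have hdvdZ : (b:ℤ) ∣ (m : ℤ) - a*(x0 + t*b) := by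
      have : ((m : ℤ) - a*(x0 + t*b)) = ((m : ℤ) - a * x0) - (a*t)*b := by push_cast; ring
      rw [this]
      exact dvd_sub hdvd0 ⟨a*t, by ring⟩
    have hle : a*(x0 + t*b) ≤ m := by
      have h1 : (a:ℤ)*(x0 + t*b) ≤ (m:ℤ) + b - 1 := by
        have hx0z : (x0 : ℤ) < b := by exact_mod_cast hx0
        have ht' : (t : ℤ) ≤ s := by exact_mod_cast ht
        have hbz : (0:ℤ) < b := by exact_mod_cast hb
        have haz : (0:ℤ) < a := by exact_mod_cast ha
        have e1 : (a:ℤ)*x0 ≤ a*(b-1) := mul_le_mul_of_nonneg_left (by linarith) (le_of_lt haz)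
        have e2 : (a:ℤ)*(t*b) ≤ a*(s*b) :=
          mul_le_mul_of_nonneg_left (mul_le_mul_of_nonneg_right ht' (le_of_lt hbz)) (le_of_lt haz)
        have h2 : (a:ℤ)*(x0 + t*b) ≤ a*(b-1) + s*(a*b) := by nlinarith [e1, e2]
        have h3 : ((s+1)*(a*b) : ℤ) + 1 ≤ (m:ℤ) + a + b := by exact_mod_cast hm
        nlinarith
      by_contra hcon
      push_neg at hcon
      have he : (m : ℤ) - a*(x0+t*b) < 0 := by
        have : (m:ℤ) < a*(x0+t*b) := by exact_mod_cast hcon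
        linarith
      have hpos : (0:ℤ) < a*(x0+t*b) - m := by linarith
      have hd' : (b:ℤ) ∣ a*(x0+t*b) - m := by
        have h5 := dvd_neg.mpr hdvdZ
        rwa [neg_sub] at h5
      have h6 := Int.le_of_dvd hpos hd'
      omega
    refine ⟨hle, ?_⟩
    have : ((m - a*(x0+t*b) : ℕ) : ℤ) = (m:ℤ) - a*(x0+t*b) := by
      push_cast [hle]; ring
    exact_mod_cast this ▸ hdvdZ
  have := Finset.card_le_card_of_injOn
    (fun t => ((x0 + t*b, (m - a*(x0 + t*b))/b) : ℕ × ℕ))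
    (s := range (s+1)) (t := pairSet a b m) ?_ ?_
  · simpa using this
  · intro t ht
    rw [Finset.mem_coe, mem_range] at ht
    obtain ⟨hle, hdv⟩ := key t (by omega)
    have heq : a*(x0 + t*b) + b * ((m - a*(x0 + t*b))/b) = m := by
      rw [Nat.mul_div_cancel' hdv]; omega
    have hx : x0 + t*b ≤ m := le_trans (Nat.le_mul_of_pos_left _ ha) (by omega)
    have hy : (m - a*(x0 + t*b))/b ≤ m := le_trans (Nat.le_mul_of_pos_left _ hb) (by omega)
    simp only [Finset.mem_coe, pairSet, mem_filter, mem_product, mem_range]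
    exact ⟨⟨by omega, by omega⟩, heq⟩
  · intro t1 h1 t2 h2 h
    simp only [Prod.mk.injEq] at h
    have : t1 * b = t2 * b := by omega
    exact Nat.eq_of_mul_eq_mul_right hb this

lemma genFrob_eq (a b : ℕ) (ha : 0 < a) (hb : 0 < b) (hab : Nat.Coprime a b) (s : ℕ) :
    genFrob ![a,b] s = ((s:ℤ)+1)*(a*b) - a - b := by
  have hA : (0:ℤ) < (a:ℤ)*(b:ℤ) := by positivity
  have haz : (1:ℤ) ≤ a := by exact_mod_cast ha
  have hbz : (1:ℤ) ≤ b := by exact_mod_cast hb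
  set g : ℤ := ((s:ℤ)+1)*(a*b) - a - b with hg
  have hgm1 : -1 ≤ g := by nlinarith
  apply IsGreatest.csSup_eq
  constructor
  · -- g ∈ S
    show repCountZ ![a,b] g ≤ s
    rcases le_or_gt 0 g with h | h
    · rw [repCountZ, if_pos h, repCount_pair_s14]
      have htn : (g.toNat : ℤ) = g := Int.toNat_of_nonneg h
      have hcl : a ∣ g.toNat + b := by
        have : (a:ℤ) ∣ (g.toNat + b : ℤ) := by
          rw [htn, hg]
          exact ⟨(s+1)*b - 1, by ring⟩
        exact_mod_cast this
      rw [pairSet_card a b ha hb hab _ hcl]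
      have heq : g.toNat + b = s*(a*b) + (a*b - a) := by
        have h1 : (g.toNat : ℤ) + b = (s:ℤ)*(a*b) + (a*b - a) := by rw [htn, hg]; ring
        have h2 : a ≤ a*b := Nat.le_mul_of_pos_right a hb
        zify [h2]
        push_cast at h1 ⊢
        linarith [h1]
      rw [heq]
      have h2 : a ≤ a*b := Nat.le_mul_of_pos_right a hb
      have h3 : a*b - a < a*b := by omega
      rw [mul_comm s (a*b), Nat.mul_add_div (by positivity), Nat.div_eq_of_lt h3]
      omega
    · rw [repCountZ, if_neg (by omega)]; omega
  · -- upper bound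
    intro n hn
    simp only [Set.mem_setOf_eq] at hn
    by_contra hcon
    push_neg at hcon
    have hn0 : 0 ≤ n := by omega
    rw [repCountZ, if_pos hn0, repCount_pair_s14] at hn
    have htn : (n.toNat : ℤ) = n := Int.toNat_of_nonneg hn0
    have hge : s + 1 ≤ (pairSet a b n.toNat).card := by
      apply pairSet_card_ge a b ha hb hab
      have : ((s:ℤ)+1)*(a*b) + 1 ≤ (n.toNat:ℤ) + a + b := by rw [htn]; omega
      exact_mod_cast this
    omega

lemma main_class (a b : ℕ) (ha : 0 < a) (hb : 0 < b) (hab : Nat.Coprime a b)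
    (i : ℕ) (n : ℤ) (hcl : (a:ℤ) ∣ n + b) :
    repCountZ ![a,b] n = i ↔
      (n ≤ ((i:ℤ)+1)*(a*b) - a - b ∧
        ∀ i' : ℕ, i = i' + 1 → ((i':ℤ)+1)*(a*b) - a - b < n) := by
  have hA : (0:ℤ) < (a:ℤ)*(b:ℤ) := by positivity
  have haz : (1:ℤ) ≤ a := by exact_mod_cast ha
  have hbz : (1:ℤ) ≤ b := by exact_mod_cast hb
  have hABg : (a:ℤ) + b - 1 ≤ a*b := by nlinarith
  rcases le_or_gt 0 n with hn | hn
  · -- n ≥ 0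
    set m := n.toNat with hmdef
    have htn : (m : ℤ) = n := Int.toNat_of_nonneg hn
    have hclN : a ∣ m + b := by
      have : (a:ℤ) ∣ ((m:ℤ) + b) := by rw [htn]; exact hcl
      exact_mod_cast this
    rw [repCountZ, if_pos hn, repCount_pair_s14, pairSet_card a b ha hb hab _ hclN]
    have hdiv : (m + b) / (a*b) = i ↔ (i*(a*b) ≤ m + b ∧ m + b < (i+1)*(a*b)) := by
      have l1 : i ≤ (m+b)/(a*b) ↔ i*(a*b) ≤ m + b := Nat.le_div_iff_mul_le (by positivity)
      have l2 : (m+b)/(a*b) < i+1 ↔ m + b < (i+1)*(a*b) := Nat.div_lt_iff_lt_mul (by positivity)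
      omega
    rw [hdiv]
    constructor
    · rintro ⟨h1, h2⟩
      constructor
      · -- upper
        have hd : (a:ℤ) ∣ ((i:ℤ)+1)*(a*b) - ((m:ℤ)+b) := by
          have c1 : (a:ℤ) ∣ ((i:ℤ)+1)*(a*b) := ⟨(i+1)*b, by ring⟩
          have c2 : (a:ℤ) ∣ ((m:ℤ)+b) := by rw [htn]; exact hcl
          exact dvd_sub c1 c2
        have hpos : (0:ℤ) < ((i:ℤ)+1)*(a*b) - ((m:ℤ)+b) := by
          have : ((m:ℤ)+b) < ((i:ℤ)+1)*(a*b) := by exact_mod_cast h2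
          linarith
        have := Int.le_of_dvd hpos hd
        rw [← htn]; linarith
      · intro i' hi'
        subst hi'
        have h1' : ((i':ℤ)+1)*(a*b) ≤ (m:ℤ)+b := by exact_mod_cast h1
        rw [← htn]
        have hd : (a:ℤ) ∣ ((m:ℤ)+b) - ((i':ℤ)+1)*(a*b) := by
          have c1 : (a:ℤ) ∣ ((i':ℤ)+1)*(a*b) := ⟨(i'+1)*b, by ring⟩
          have c2 : (a:ℤ) ∣ ((m:ℤ)+b) := by rw [htn]; exact hcl
          exact dvd_sub c2 c1
        -- need strict: (i'+1)ab - a - b < m, i.e. (i'+1)ab < m + a + b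
        linarith
    · rintro ⟨h1, h2⟩
      constructor
      · -- lower: i*(ab) ≤ m + b
        rcases Nat.eq_zero_or_pos i with rfl | hi
        · simp
        · obtain ⟨i', rfl⟩ : ∃ i', i = i' + 1 := ⟨i - 1, by omega⟩
          have h2' := h2 i' rfl
          -- (i'+1)ab - a - b < m; and a ∣ (m+b) - (i'+1)ab; show (i'+1)ab ≤ m+b
          have hd : (a:ℤ) ∣ ((m:ℤ)+b) - ((i':ℤ)+1)*(a*b) := by
            have c1 : (a:ℤ) ∣ ((i':ℤ)+1)*(a*b) := ⟨(i'+1)*b, by ring⟩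
            have c2 : (a:ℤ) ∣ ((m:ℤ)+b) := by rw [htn]; exact hcl
            exact dvd_sub c2 c1
          set e : ℤ := ((m:ℤ)+b) - ((i':ℤ)+1)*(a*b) with he
          have hegt : -(a:ℤ) < e := by rw [he, ← htn] at *; linarith
          have he0 : 0 ≤ e := by
            by_contra hc
            push_neg at hc
            have : (a:ℤ) ≤ -e := Int.le_of_dvd (by linarith) (dvd_neg.mpr hd)
            linarith
          have : ((i':ℤ)+1+1)*(a*b) ≤ (m:ℤ)+b + (a*b) := by linarith [he0]
          have goal : ((i'+1:ℕ):ℤ)*((a:ℤ)*(b:ℤ)) ≤ (m:ℤ)+b := by push_cast; linarith [he0]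
          exact_mod_cast goal
      · -- upper: m + b < (i+1)*(ab)
        have h1' : (m:ℤ) ≤ ((i:ℤ)+1)*(a*b) - a - b := by rw [htn]; exact h1
        have : ((m:ℤ)+b) < ((i:ℤ)+1)*(a*b) := by linarith
        exact_mod_cast this
  · -- n < 0
    rw [repCountZ, if_neg (by omega)]
    constructor
    · rintro rfl
      refine ⟨by push_cast; nlinarith, by omega⟩
    · rintro ⟨h1, h2⟩
      by_contra hc
      obtain ⟨i', rfl⟩ : ∃ i', i = i' + 1 := ⟨i - 1, by omega⟩
      have := h2 i' rfl
      have hi'0 : (0:ℤ) ≤ i' := Int.natCast_nonneg i'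
      nlinarith


lemma repCountZ_comm (a b : ℕ) (n : ℤ) : repCountZ ![a,b] n = repCountZ ![b,a] n := by
  unfold repCountZ
  split
  · rw [repCount_pair_s14, repCount_pair_s14, pairSet_comm]
  · rfl

/-- for coprime positive `a, b`, `c > 0` divisible by `a` or by `b`, and `j ∈ ℤ`,
`d(g(a,b;s) + jc; a, b) = i` iff `g(a,b;i-1) < g(a,b;s) + jc ≤ g(a,b;i)`
(where `g(a,b;-1) = -∞`, so for `i = 0` only the upper inequality is required). -/
theorem stmt_14 (a b : ℕ) (ha : 0 < a) (hb : 0 < b) (hab : Nat.gcd a b = 1)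
    (i s : ℕ) (c : ℕ) (hc : 0 < c) (hdvd : a ∣ c ∨ b ∣ c) (j : ℤ) :
    repCountZ ![a, b] (genFrob ![a, b] s + j * c) = i ↔
      (genFrob ![a, b] s + j * c ≤ genFrob ![a, b] i ∧
        ∀ i' : ℕ, i = i' + 1 → genFrob ![a, b] i' < genFrob ![a, b] s + j * c) := by
  have hab' : Nat.Coprime a b := hab
  simp only [genFrob_eq a b ha hb hab']
  set n : ℤ := ((s:ℤ)+1)*(a*b) - a - b + j * c with hn
  rcases hdvd with hd | hd
  · obtain ⟨c', rfl⟩ := hd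
    have hcl : (a:ℤ) ∣ n + b := ⟨((s:ℤ)+1)*b - 1 + j*c', by rw [hn]; push_cast; ring⟩
    exact main_class a b ha hb hab' i n hcl
  · obtain ⟨c', rfl⟩ := hd
    have hcl : (b:ℤ) ∣ n + a := ⟨((s:ℤ)+1)*a - 1 + j*c', by rw [hn]; push_cast; ring⟩
    rw [repCountZ_comm, main_class b a hb ha hab'.symm i n hcl]
    constructor
    · rintro ⟨h1, h2⟩
      exact ⟨by push_cast at h1 ⊢; linarith, fun i' hi' => by
        have := h2 i' hi'; push_cast at this ⊢; linarith⟩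
    · rintro ⟨h1, h2⟩
      exact ⟨by push_cast at h1 ⊢; linarith, fun i' hi' => by
        have := h2 i' hi'; push_cast at this ⊢; linarith⟩
end
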